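/- arXiv:2210.03410 — 3 statements merged into one kernel-verified Lean document; each statement's English description precedes it below -/
import Mathlib

section
/- Let n and d be odd positive integers with d < (n+1)/2. Then hmin(n, d) = ⌈(n+1)(d+1)/(4d)⌉. -/
open Finset
open scoped Classical

/-- The closed neighborhood `N[v] = {v} ∪ N(v)` of a vertex `v` in a simple graph `G`.
A `d`-regular graph with loops is modeled by a simple graph in which every
closed neighborhood has size `d`. -/
noncomputable def closedNbhd {n : ℕ} (G : SimpleGraph (Fin n)) (v : Fin n) : Finset (Fin n) :=
  Finset.univ.filter fun u => u = v ∨ G.Adj v u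

/-- A configuration with parameters `(n, d, h)`: a simple graph `G` on `n` vertices all
of whose closed neighborhoods have size `d` (i.e. a `d`-regular graph with loops),
together with an opinion function `f : V → {1, -1}` having exactly `h` happy vertices. -/
def IsConfig {n : ℕ} (d h : ℕ) (G : SimpleGraph (Fin n)) (f : Fin n → ℤ) : Prop :=
  (∀ v, (closedNbhd G v).card = d) ∧ (∀ v, f v = 1 ∨ f v = -1) ∧
  (Finset.univ.filter fun v => f v = 1).card = h

/-- The number of proponents: vertices `v` with `∑_{u ∈ N[v]} f u ≥ 1`. -/
noncomputable def numProponents {n : ℕ} (G : SimpleGraph (Fin n)) (f : Fin n → ℤ) : ℕ :=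
  (Finset.univ.filter fun v => 1 ≤ ∑ u ∈ closedNbhd G v, f u).card

/-- A configuration is approving if more than `n/2` of its vertices are proponents. -/
def IsApproving {n : ℕ} (G : SimpleGraph (Fin n)) (f : Fin n → ℤ) : Prop :=
  2 * numProponents G f > n

/-- `hmin n d`: the least `h` for which an approving configuration with parameters
`(n, d, h)` exists. -/
noncomputable def hmin (n d : ℕ) : ℕ :=
  sInf {h : ℕ | ∃ (G : SimpleGraph (Fin n)) (f : Fin n → ℤ), IsConfig d h G f ∧ IsApproving G f}

/-- `hmax n d`: the greatest `h ≤ n` for which a disapproving configuration with parameters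
`(n, d, h)` exists. -/
noncomputable def hmax (n d : ℕ) : ℕ :=
  sSup {h : ℕ | h ≤ n ∧
    ∃ (G : SimpleGraph (Fin n)) (f : Fin n → ℤ), IsConfig d h G f ∧ ¬ IsApproving G f}

/-- `hminN n`: the minimum of `hmin n d` over odd `d` with `1 ≤ d ≤ n`. -/
noncomputable def hminN (n : ℕ) : ℕ :=
  sInf {m : ℕ | ∃ d : ℕ, Odd d ∧ 1 ≤ d ∧ d ≤ n ∧ m = hmin n d}

noncomputable def Fcard (P : ℕ → Prop) (x : ℕ) : ℕ := ((range x).filter P).card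

lemma cnt_shift (Q : ℕ → Prop) (t a b : ℕ) :
    ((Ico (a+t) (b+t)).filter Q).card = ((Ico a b).filter (fun x => Q (x+t))).card := by
  apply Finset.card_bij (fun x _ => x - t)
  · intro x hx
    simp only [mem_filter, mem_Ico] at hx ⊢
    refine ⟨⟨by omega, by omega⟩, ?_⟩
    have : x - t + t = x := by omega
    rw [this]; exact hx.2
  · intro x hx y hy h
    simp only [mem_filter, mem_Ico] at hx hy
    omega
  · intro y hy
    simp only [mem_filter, mem_Ico] at hy
    exact ⟨y + t, by simp only [mem_filter, mem_Ico]; exact ⟨⟨by omega, by omega⟩, hy.2⟩, by omega⟩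

lemma cIco_F (P : ℕ → Prop) {a b : ℕ} (hab : a ≤ b) :
    Fcard P b = Fcard P a + ((Ico a b).filter P).card := by
  unfold Fcard
  simp only [Finset.range_eq_Ico]
  rw [← Finset.Ico_union_Ico_eq_Ico (Nat.zero_le a) hab, Finset.filter_union,
    Finset.card_union_of_disjoint
    (Finset.disjoint_filter_filter (Finset.Ico_disjoint_Ico_consecutive 0 a b))]

lemma countWindow_nowrap (P : ℕ → Prop) {L t dd : ℕ} (h : t + dd ≤ L) :
    ((range dd).filter (fun j => P ((t + j) % L))).card = ((Ico t (t+dd)).filter P).card := by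
  have e0 := cnt_shift P t 0 dd
  rw [Nat.zero_add, Nat.add_comm dd t] at e0
  rw [e0, Finset.range_eq_Ico]
  congr 1
  apply Finset.filter_congr
  intro x hx
  simp only [mem_Ico] at hx
  rw [Nat.mod_eq_of_lt (by omega : t + x < L), Nat.add_comm]

lemma countWindow_wrap (P : ℕ → Prop) {L t dd : ℕ} (ht : t < L) (h2 : L < t + dd)
    (hdd : dd ≤ L) :
    ((range dd).filter (fun j => P ((t + j) % L))).card
      = ((Ico t L).filter P).card + ((range (t + dd - L)).filter P).card := by
  have hsplit : range dd = Ico 0 (L - t) ∪ Ico (L - t) dd := by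
    rw [Finset.range_eq_Ico, Finset.Ico_union_Ico_eq_Ico (Nat.zero_le (L-t)) (by omega)]
  rw [hsplit, Finset.filter_union, Finset.card_union_of_disjoint
    (Finset.disjoint_filter_filter (Finset.Ico_disjoint_Ico_consecutive 0 (L-t) dd))]
  congr 1
  · -- first part: no wrap
    have e0 := cnt_shift P t 0 (L - t)
    rw [Nat.zero_add, (by omega : L - t + t = L)] at e0
    rw [e0]
    congr 1
    apply Finset.filter_congr
    intro x hx
    simp only [mem_Ico] at hx
    rw [Nat.mod_eq_of_lt (by omega : t + x < L), Nat.add_comm]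
  · -- second part: wrap
    have e0 := cnt_shift (fun j => P ((t + j) % L)) (L - t) 0 (t + dd - L)
    rw [Nat.zero_add, (by omega : t + dd - L + (L - t) = dd)] at e0
    rw [e0, Finset.range_eq_Ico]
    congr 1
    apply Finset.filter_congr
    intro x hx
    simp only [mem_Ico] at hx
    have h1 : t + (x + (L - t)) = L + x := by omega
    rw [h1, Nat.add_mod_left, Nat.mod_eq_of_lt (by omega : x < L)]

lemma Fstep (P : ℕ → Prop) (x : ℕ) :
    Fcard P (x+1) = Fcard P x + if P x then 1 else 0 := by
  unfold Fcard
  rw [Finset.range_add_one, Finset.filter_insert]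
  split_ifs with h
  · rw [Finset.card_insert_of_notMem (by simp)]
  · rfl

def HG (e' W y : ℕ) : Prop :=
  y = 0 ∨ (y % 2 = 1 ∧ y < 2*e') ∨ (y % 2 = 0 ∧ 2*e' ≤ y ∧ y < W - 1)

lemma Fg {m e' : ℕ} (hm : 2 ≤ m) (he1 : 1 ≤ e') (he2 : e' ≤ m) :
    ∀ x, x ≤ 2*m + 2*e' - 2 →
      (x = 0 ∧ Fcard (HG e' (2*m + 2*e' - 2)) x = 0) ∨
      (1 ≤ x ∧ x ≤ 2*e' ∧ 2 * Fcard (HG e' (2*m + 2*e' - 2)) x = x + 2 - x % 2) ∨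
      (2*e' < x ∧ 2 * Fcard (HG e' (2*m + 2*e' - 2)) x = x + 3 - (x+1) % 2) := by
  intro x
  induction x with
  | zero => intro _; left; exact ⟨rfl, by simp [Fcard]⟩
  | succ y ih =>
    intro hy
    have ihy := ih (by omega)
    rw [Fstep]
    by_cases hg : HG e' (2*m + 2*e' - 2) y
    · simp only [hg, if_true]
      unfold HG at hg
      omega
    · simp only [hg, if_false]
      unfold HG at hg
      omega

lemma gadget_total {m e' : ℕ} (hm : 2 ≤ m) (he1 : 1 ≤ e') (he2 : e' ≤ m) :
    Fcard (HG e' (2*m + 2*e' - 2)) (2*m + 2*e' - 2) = m + e' := by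
  have := Fg hm he1 he2 (2*m + 2*e' - 2) le_rfl
  omega

lemma gadget_window {m e' t : ℕ} (hm : 2 ≤ m) (he1 : 1 ≤ e') (he2 : e' ≤ m)
    (ht : t < 2*m + 2*e' - 2) :
    m ≤ ((range (2*m-1)).filter
      (fun j => HG e' (2*m + 2*e' - 2) ((t + j) % (2*m + 2*e' - 2)))).card := by
  by_cases hw : t + (2*m-1) ≤ 2*m + 2*e' - 2
  · rw [countWindow_nowrap (HG e' (2*m + 2*e' - 2)) hw]
    have h1 := cIco_F (HG e' (2*m + 2*e' - 2)) (show t ≤ t + (2*m-1) by omega)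
    have f1 := Fg hm he1 he2 t (by omega)
    have f2 := Fg hm he1 he2 (t + (2*m-1)) (by omega)
    omega
  · rw [countWindow_wrap (HG e' (2*m + 2*e' - 2)) ht (by omega) (by omega)]
    have h1 := cIco_F (HG e' (2*m + 2*e' - 2)) (show t ≤ 2*m + 2*e' - 2 by omega)
    have h2 : ((range (t + (2*m-1) - (2*m + 2*e' - 2))).filter (HG e' (2*m + 2*e' - 2))).card
        = Fcard (HG e' (2*m + 2*e' - 2)) (t + (2*m-1) - (2*m + 2*e' - 2)) := rfl
    have f1 := Fg hm he1 he2 t (by omega)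
    have f2 := Fg hm he1 he2 (2*m + 2*e' - 2) (by omega)
    have f3 := Fg hm he1 he2 (t + (2*m-1) - (2*m + 2*e' - 2)) (by omega)
    omega

lemma modIf3 {L x : ℕ} (hL : 0 < L) (hx : x < 3 * L) :
    x % L = if x < L then x else if x < 2 * L then x - L else x - 2 * L := by
  split_ifs with h1 h2
  · exact Nat.mod_eq_of_lt h1
  · have h : x - L < L := by omega
    have hx' : x = L + (x - L) := by omega
    conv_lhs => rw [hx']
    rw [Nat.add_mod_left, Nat.mod_eq_of_lt h]
  · have h : x - 2 * L < L := by omega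
    have hx' : x = L + (L + (x - 2 * L)) := by omega
    conv_lhs => rw [hx']
    rw [Nat.add_mod_left, Nat.add_mod_left, Nat.mod_eq_of_lt h]

def near (m L a b : ℕ) : Prop :=
  (a + L - b) % L ≤ m - 1 ∨ (b + L - a) % L ≤ m - 1

lemma near_symm {m L a b : ℕ} : near m L a b → near m L b a := Or.symm

lemma near_iff {m L a b : ℕ} (hm : 1 ≤ m) (hL : 2*m - 1 ≤ L) (ha : a < L) (hb : b < L) :
    near m L a b ↔ ∃ j, j < 2*m - 1 ∧ b = (a + (L - (m-1)) + j) % L := by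
  have hL0 : 0 < L := by omega
  unfold near
  by_cases hab : b ≤ a
  · have hY : (a + L - b) % L = a - b := by
      have h' : a + L - b = L + (a - b) := by omega
      rw [h', Nat.add_mod_left, Nat.mod_eq_of_lt (by omega)]
    have hX : (b + L - a) % L = if b = a then 0 else b + L - a := by
      split_ifs with h
      · subst h; have h' : b + L - b = L := by omega
        rw [h', Nat.mod_self]
      · exact Nat.mod_eq_of_lt (by omega)
    rw [hY, hX]
    constructor
    · rintro (h | h)
      · refine ⟨(m-1) - (a - b), by omega, ?_⟩
        rw [modIf3 hL0 (by omega)]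
        split_ifs <;> omega
      · refine ⟨(m-1) + (if b = a then 0 else b + L - a), ?_, ?_⟩
        · split_ifs at h ⊢ <;> omega
        · rw [modIf3 hL0 (by split_ifs <;> omega)]
          split_ifs <;> omega
    · rintro ⟨j, hj, hbj⟩
      rw [modIf3 hL0 (by omega)] at hbj
      split_ifs at hbj <;> split_ifs <;> omega
  · have hY : (a + L - b) % L = a + L - b := Nat.mod_eq_of_lt (by omega)
    have hX : (b + L - a) % L = b - a := by
      have h' : b + L - a = L + (b - a) := by omega
      rw [h', Nat.add_mod_left, Nat.mod_eq_of_lt (by omega)]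
    rw [hY, hX]
    constructor
    · rintro (h | h)
      · refine ⟨(m-1) - (a + L - b), by omega, ?_⟩
        rw [modIf3 hL0 (by omega)]
        split_ifs <;> omega
      · refine ⟨(m-1) + (b - a), by omega, ?_⟩
        rw [modIf3 hL0 (by omega)]
        split_ifs <;> omega
    · rintro ⟨j, hj, hbj⟩
      rw [modIf3 hL0 (by omega)] at hbj
      split_ifs at hbj <;> omega

lemma div_facts {k x : ℕ} (hk : 0 < k) : k * (x / k) ≤ x ∧ x < k * (x / k) + k := by
  have h1 := Nat.div_add_mod x k
  have h2 := Nat.mod_lt x hk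
  omega

lemma blockBound {k x B : ℕ} (hk : 0 < k) (hx : x < B * k) : k * (x / k) + k ≤ B * k := by
  have h1 : x / k < B := by rwa [Nat.div_lt_iff_lt_mul hk]
  have h2 : k * (x/k) + k = k * (x/k + 1) := by ring
  rw [h2, Nat.mul_comm]
  exact Nat.mul_le_mul_right k h1

lemma blockEqDiv {k x y : ℕ} (hk : 0 < k) (h1 : k * (x/k) ≤ y) (h2 : y < k * (x/k) + k) :
    y / k = x / k := by
  have heq : y = (y - k*(x/k)) + k * (x/k) := by omega
  rw [heq, Nat.mul_comm k (x/k), Nat.add_mul_div_right _ _ hk,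
    Nat.div_eq_of_lt (by have := Nat.mul_comm k (x/k); omega), Nat.zero_add]

def bsF (m B e' : ℕ) (x : ℕ) : ℕ :=
  if x < B*(2*m-1) then (2*m-1) * (x / (2*m-1))
  else if x < B*(2*m-1) + (2*m+2*e'-2) then B*(2*m-1)
  else B*(2*m-1) + (2*m+2*e'-2)

def blF (m B e' lf : ℕ) (x : ℕ) : ℕ :=
  if x < B*(2*m-1) then 2*m-1
  else if x < B*(2*m-1) + (2*m+2*e'-2) then 2*m+2*e'-2
  else lf

def GC (m B e' lf n : ℕ) : SimpleGraph (Fin n) where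
  Adj u v := u ≠ v ∧ bsF m B e' u.val = bsF m B e' v.val ∧
    near m (blF m B e' lf (min u.val v.val))
      (u.val - bsF m B e' u.val) (v.val - bsF m B e' v.val)
  symm := by
    constructor
    rintro u v ⟨h1, h2, h3⟩
    refine ⟨h1.symm, h2.symm, ?_⟩
    rw [min_comm]
    exact near_symm h3
  loopless := by constructor; rintro v ⟨h, -⟩; exact h rfl

section Constr

variable {m B e' lf n : ℕ}

/-- basic facts about the block containing `x` -/
lemma blk_facts (hm : 2 ≤ m) (he1 : 1 ≤ e') (he2 : e' ≤ m) (hlf : 2*m-1 ≤ lf)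
    (hn : n = B*(2*m-1) + (2*m+2*e'-2) + lf) {x : ℕ} (hx : x < n) :
    bsF m B e' x ≤ x ∧ x < bsF m B e' x + blF m B e' lf x ∧
      bsF m B e' x + blF m B e' lf x ≤ n ∧ 2*m-1 ≤ blF m B e' lf x := by
  have hk : 0 < 2*m-1 := by omega
  unfold bsF blF
  by_cases h1 : x < B*(2*m-1)
  · rw [if_pos h1, if_pos h1]
    have hd := div_facts (x := x) hk
    have hb := blockBound hk h1
    omega
  · rw [if_neg h1, if_neg h1]
    by_cases h2 : x < B*(2*m-1) + (2*m+2*e'-2)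
    · rw [if_pos h2, if_pos h2]
      omega
    · rw [if_neg h2, if_neg h2]
      omega

/-- block membership characterisation -/
lemma blk_mem (hm : 2 ≤ m) (he1 : 1 ≤ e') (he2 : e' ≤ m) (hlf : 2*m-1 ≤ lf)
    (hn : n = B*(2*m-1) + (2*m+2*e'-2) + lf) {x y : ℕ} (hx : x < n) (hy : y < n) :
    bsF m B e' y = bsF m B e' x ↔
      (bsF m B e' x ≤ y ∧ y < bsF m B e' x + blF m B e' lf x) := by
  have hk : 0 < 2*m-1 := by omega
  have hdx := div_facts (x := x) (k := 2*m-1) hk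
  have hdy := div_facts (x := y) (k := 2*m-1) hk
  unfold bsF blF
  by_cases h1 : x < B*(2*m-1) <;> by_cases h2 : y < B*(2*m-1)
  · rw [if_pos h1, if_pos h1, if_pos h2]
    have hbx := blockBound hk h1
    have hby := blockBound hk h2
    constructor
    · intro h
      have hq : y / (2*m-1) = x / (2*m-1) := Nat.eq_of_mul_eq_mul_left hk h
      rw [hq] at hdy
      omega
    · rintro ⟨ha, hb⟩
      rw [blockEqDiv hk ha hb]
  · rw [if_pos h1, if_pos h1, if_neg h2]
    have hbx := blockBound hk h1
    by_cases h3 : y < B*(2*m-1) + (2*m+2*e'-2)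
    · rw [if_pos h3]; omega
    · rw [if_neg h3]; omega
  · rw [if_neg h1, if_neg h1, if_pos h2]
    have hby := blockBound hk h2
    by_cases h4 : x < B*(2*m-1) + (2*m+2*e'-2)
    · rw [if_pos h4, if_pos h4]; omega
    · rw [if_neg h4, if_neg h4]; omega
  · rw [if_neg h1, if_neg h1, if_neg h2]
    by_cases h3 : y < B*(2*m-1) + (2*m+2*e'-2) <;>
      by_cases h4 : x < B*(2*m-1) + (2*m+2*e'-2)
    · rw [if_pos h3, if_pos h4, if_pos h4]; omega
    · rw [if_pos h3, if_neg h4, if_neg h4]; omega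
    · rw [if_neg h3, if_pos h4, if_pos h4]; omega
    · rw [if_neg h3, if_neg h4, if_neg h4]; omega

/-- blocks with equal start have equal length -/
lemma blk_len (hm : 2 ≤ m) (he1 : 1 ≤ e') (he2 : e' ≤ m) (hlf : 2*m-1 ≤ lf)
    (hn : n = B*(2*m-1) + (2*m+2*e'-2) + lf) {x y : ℕ} (hx : x < n) (hy : y < n)
    (h : bsF m B e' y = bsF m B e' x) : blF m B e' lf y = blF m B e' lf x := by
  have hk : 0 < 2*m-1 := by omega
  have hdx := div_facts (x := x) (k := 2*m-1) hk
  have hdy := div_facts (x := y) (k := 2*m-1) hk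
  unfold bsF at h
  unfold blF
  by_cases h1 : x < B*(2*m-1) <;> by_cases h2 : y < B*(2*m-1)
  · rw [if_pos h1, if_pos h2]
  · rw [if_pos h1] at h ⊢
    rw [if_neg h2] at h ⊢
    have hbx := blockBound hk h1
    by_cases h3 : y < B*(2*m-1) + (2*m+2*e'-2)
    · rw [if_pos h3] at h; omega
    · rw [if_neg h3] at h; omega
  · rw [if_neg h1] at h ⊢
    rw [if_pos h2] at h ⊢
    have hby := blockBound hk h2
    by_cases h4 : x < B*(2*m-1) + (2*m+2*e'-2)
    · rw [if_pos h4] at h ⊢; omega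
    · rw [if_neg h4] at h ⊢; omega
  · rw [if_neg h1] at h ⊢
    rw [if_neg h2] at h ⊢
    by_cases h3 : y < B*(2*m-1) + (2*m+2*e'-2) <;>
      by_cases h4 : x < B*(2*m-1) + (2*m+2*e'-2)
    · rw [if_pos h3] at h ⊢; rw [if_pos h4] at h ⊢
    · rw [if_pos h3] at h ⊢; rw [if_neg h4] at h ⊢; omega
    · rw [if_neg h3] at h ⊢; rw [if_pos h4] at h ⊢; omega
    · rw [if_neg h3] at h ⊢; rw [if_neg h4] at h ⊢

end Constr


lemma mod_add_inj {L c j1 j2 : ℕ} (h1 : j1 < L) (h2 : j2 < L)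
    (h : (c + j1) % L = (c + j2) % L) : j1 = j2 := by
  rw [Nat.add_mod c j1, Nat.add_mod c j2, Nat.mod_eq_of_lt h1, Nat.mod_eq_of_lt h2] at h
  have hc := Nat.mod_lt c (show 0 < L by omega)
  rw [modIf3 (x := c % L + j1) (by omega) (by omega),
    modIf3 (x := c % L + j2) (by omega) (by omega)] at h
  split_ifs at h <;> omega

def nbr (m B e' lf : ℕ) {n : ℕ} (v : Fin n) (j : ℕ) : Fin n :=
  ⟨(bsF m B e' v.val +
      (v.val - bsF m B e' v.val + (blF m B e' lf v.val - (m-1)) + j) % blF m B e' lf v.val) % n,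
    Nat.mod_lt _ v.pos⟩

section Constr2

variable {m B e' lf n : ℕ}
variable (hm : 2 ≤ m) (he1 : 1 ≤ e') (he2 : e' ≤ m) (hlf : 2*m-1 ≤ lf)
variable (hn : n = B*(2*m-1) + (2*m+2*e'-2) + lf)

include hm he1 he2 hlf hn

lemma nbr_val (v : Fin n) (j : ℕ) :
    (nbr m B e' lf v j).val = bsF m B e' v.val +
      (v.val - bsF m B e' v.val + (blF m B e' lf v.val - (m-1)) + j) % blF m B e' lf v.val := by
  have hf := blk_facts hm he1 he2 hlf hn v.isLt
  have hbl : 0 < blF m B e' lf v.val := by omega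
  have hlt : (v.val - bsF m B e' v.val + (blF m B e' lf v.val - (m-1)) + j) % blF m B e' lf v.val
      < blF m B e' lf v.val := Nat.mod_lt _ hbl
  unfold nbr
  simp only
  exact Nat.mod_eq_of_lt (by omega)

lemma nbr_inj (v : Fin n) : ∀ j1 ∈ range (2*m-1), ∀ j2 ∈ range (2*m-1),
    nbr m B e' lf v j1 = nbr m B e' lf v j2 → j1 = j2 := by
  intro j1 hj1 j2 hj2 h
  simp only [mem_range] at hj1 hj2
  have hf := blk_facts hm he1 he2 hlf hn v.isLt
  have hv1 := nbr_val hm he1 he2 hlf hn v j1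
  have hv2 := nbr_val hm he1 he2 hlf hn v j2
  have : (nbr m B e' lf v j1).val = (nbr m B e' lf v j2).val := by rw [h]
  rw [hv1, hv2] at this
  have h' := Nat.add_left_cancel this
  exact mod_add_inj (by omega) (by omega) h'

lemma closedNbhd_GC (v : Fin n) :
    closedNbhd (GC m B e' lf n) v = (range (2*m-1)).image (nbr m B e' lf v) := by
  have hfv := blk_facts hm he1 he2 hlf hn v.isLt
  ext u
  simp only [closedNbhd, mem_filter, mem_univ, true_and, mem_image, mem_range]
  constructor
  · rintro (rfl | ⟨hne, hbs, hnear⟩)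
    · refine ⟨m-1, by omega, ?_⟩
      apply Fin.ext
      rw [nbr_val hm he1 he2 hlf hn]
      have harg : u.val - bsF m B e' u.val + (blF m B e' lf u.val - (m-1)) + (m-1)
          = (u.val - bsF m B e' u.val) + blF m B e' lf u.val := by omega
      rw [harg, Nat.add_mod_right, Nat.mod_eq_of_lt (by omega)]
      omega
    · -- Adj v u
      have hfu := blk_facts hm he1 he2 hlf hn u.isLt
      have hbl : blF m B e' lf u.val = blF m B e' lf v.val :=
        blk_len hm he1 he2 hlf hn v.isLt u.isLt hbs.symm
      have hmin : blF m B e' lf (min v.val u.val) = blF m B e' lf v.val := by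
        rcases le_total v.val u.val with h1 | h1
        · rw [min_eq_left h1]
        · rw [min_eq_right h1]; exact hbl
      rw [hmin] at hnear
      have hmem := (blk_mem hm he1 he2 hlf hn v.isLt u.isLt).mp hbs.symm
      have hnear2 : near m (blF m B e' lf v.val)
          (v.val - bsF m B e' v.val) (u.val - bsF m B e' v.val) := by
        have hx : u.val - bsF m B e' u.val = u.val - bsF m B e' v.val := by rw [hbs.symm]
        rw [← hx]
        exact hnear
      have hnear' := (near_iff (m := m) (L := blF m B e' lf v.val)
        (by omega) (by omega) (by omega) (by omega)).mp hnear2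
      obtain ⟨j, hj, hb⟩ := hnear'
      refine ⟨j, hj, ?_⟩
      apply Fin.ext
      rw [nbr_val hm he1 he2 hlf hn, ← hb]
      omega
  · rintro ⟨j, hj, rfl⟩
    have hval := nbr_val hm he1 he2 hlf hn v j
    set b := (v.val - bsF m B e' v.val + (blF m B e' lf v.val - (m-1)) + j) % blF m B e' lf v.val
      with hbdef
    have hblt : b < blF m B e' lf v.val := Nat.mod_lt _ (by omega)
    by_cases heq : nbr m B e' lf v j = v
    · exact Or.inl heq
    · right
      have humem : bsF m B e' v.val ≤ (nbr m B e' lf v j).val ∧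
          (nbr m B e' lf v j).val < bsF m B e' v.val + blF m B e' lf v.val := by
        rw [hval]; omega
      have hbs : bsF m B e' (nbr m B e' lf v j).val = bsF m B e' v.val :=
        (blk_mem hm he1 he2 hlf hn v.isLt (nbr m B e' lf v j).isLt).mpr humem
      refine ⟨Ne.symm heq, hbs.symm, ?_⟩
      have hbl : blF m B e' lf (nbr m B e' lf v j).val = blF m B e' lf v.val :=
        blk_len hm he1 he2 hlf hn v.isLt (nbr m B e' lf v j).isLt hbs
      have hmin : blF m B e' lf (min v.val (nbr m B e' lf v j).val) = blF m B e' lf v.val := by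
        rcases le_total v.val (nbr m B e' lf v j).val with h1 | h1
        · rw [min_eq_left h1]
        · rw [min_eq_right h1]; exact hbl
      rw [hmin]
      have hbv : (nbr m B e' lf v j).val - bsF m B e' (nbr m B e' lf v j).val = b := by
        rw [hbs, hval]; omega
      rw [hbv]
      apply (near_iff (show 1 ≤ m by omega) (by omega)
        (show v.val - bsF m B e' v.val < blF m B e' lf v.val by omega) hblt).mpr
      exact ⟨j, by omega, hbdef⟩

lemma closedNbhd_GC_card (v : Fin n) :
    (closedNbhd (GC m B e' lf n) v).card = 2*m-1 := by
  rw [closedNbhd_GC hm he1 he2 hlf hn v,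
    Finset.card_image_of_injOn (fun j1 hj1 j2 hj2 h => nbr_inj hm he1 he2 hlf hn v j1 hj1 j2 hj2 h),
    Finset.card_range]

end Constr2


def Hap (m B e' : ℕ) (x : ℕ) : Prop :=
  (x < B*(2*m-1) ∧ x % (2*m-1) < m) ∨
  (B*(2*m-1) ≤ x ∧ x < B*(2*m-1) + (2*m+2*e'-2) ∧ HG e' (2*m+2*e'-2) (x - B*(2*m-1)))

noncomputable def fC (m B e' n : ℕ) : Fin n → ℤ := fun v => if Hap m B e' v.val then 1 else -1

lemma card_fin_filter_val {n : ℕ} (P : ℕ → Prop) :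
    ((univ : Finset (Fin n)).filter (fun v => P v.val)).card = ((range n).filter P).card := by
  apply Finset.card_bij (fun v _ => v.val)
  · intro v hv
    simp only [mem_filter, mem_univ, true_and] at hv
    simp only [mem_filter, mem_range]
    exact ⟨v.isLt, hv⟩
  · intro a ha b hb h
    exact Fin.ext h
  · intro y hy
    simp only [mem_filter, mem_range] at hy
    exact ⟨⟨y, hy.1⟩, by simp only [mem_filter, mem_univ, true_and]; exact hy.2, rfl⟩

def Plt (m x : ℕ) : Prop := x < m

lemma range_filter_lt_card (a b : ℕ) (h : a ≤ b) :
    ((range b).filter (Plt a)).card = a := by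
  have he : (range b).filter (Plt a) = range a := by
    ext x; simp only [mem_filter, mem_range, Plt]; omega
  rw [he, card_range]

/-- number of happy residues in a window of a clique block -/
lemma clique_window {m t : ℕ} (hm : 2 ≤ m) (ht : t < 2*m-1) :
    ((range (2*m-1)).filter (fun j => Plt m ((t + j) % (2*m-1)))).card = m := by
  by_cases hw : t + (2*m-1) ≤ 2*m-1
  · rw [countWindow_nowrap (Plt m) hw]
    have ht0 : t = 0 := by omega
    subst ht0
    have he : Ico 0 (0 + (2*m-1)) = range (2*m-1) := by
      rw [Nat.zero_add, Finset.range_eq_Ico]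
    rw [he, range_filter_lt_card m (2*m-1) (by omega)]
  · rw [countWindow_wrap (Plt m) ht (by omega) (by omega)]
    have h1 := cIco_F (Plt m) (show t ≤ 2*m-1 by omega)
    have h2 : Fcard (Plt m) (2*m-1) = m := by
      unfold Fcard; exact range_filter_lt_card m (2*m-1) (by omega)
    have h3 : ((range (t + (2*m-1) - (2*m-1))).filter (Plt m)).card
        = Fcard (Plt m) t := by
      have h4 : t + (2*m-1) - (2*m-1) = t := by omega
      rw [h4]; rfl
    rw [h3]
    unfold Fcard at h1 h2 ⊢
    omega

/-- happy count in the clique region -/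
lemma clique_total {m : ℕ} (hm : 2 ≤ m) :
    ∀ b, ((range (b*(2*m-1))).filter (fun x => Plt m (x % (2*m-1)))).card = b * m := by
  intro b
  induction b with
  | zero => simp
  | succ c ih =>
    simp only [Finset.range_eq_Ico] at ih ⊢
    rw [← Finset.Ico_union_Ico_eq_Ico (Nat.zero_le (c*(2*m-1)))
        (show c*(2*m-1) ≤ (c+1)*(2*m-1) by nlinarith),
      Finset.filter_union, Finset.card_union_of_disjoint
      (Finset.disjoint_filter_filter (Finset.Ico_disjoint_Ico_consecutive _ _ _)), ih]
    have he2 : ((c+1)*(2*m-1)) = (2*m-1) + c*(2*m-1) := by ring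
    have hcnt : ((Ico (c*(2*m-1)) ((c+1)*(2*m-1))).filter (fun x => Plt m (x % (2*m-1)))).card
        = m := by
      have hb : Ico (c*(2*m-1)) ((c+1)*(2*m-1))
          = Ico (0 + c*(2*m-1)) ((2*m-1) + c*(2*m-1)) := by
        congr 1 <;> ring
      rw [hb, cnt_shift (fun x => Plt m (x % (2*m-1))) (c*(2*m-1)) 0 (2*m-1)]
      have hc : ∀ x ∈ Ico 0 (2*m-1),
          (Plt m ((x + c*(2*m-1)) % (2*m-1))) ↔ (Plt m x) := by
        intro x hx
        simp only [mem_Ico] at hx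
        rw [Nat.add_mul_mod_self_right, Nat.mod_eq_of_lt (by omega)]
      rw [Finset.filter_congr hc, ← Finset.range_eq_Ico,
        range_filter_lt_card m (2*m-1) (by omega)]
    rw [hcnt]
    ring

lemma sum_pm {α : Type*} (S : Finset α) (P : α → Prop) :
    ∑ x ∈ S, (if P x then (1:ℤ) else -1) = 2 * ((S.filter P).card : ℤ) - S.card := by
  have h1 : ∀ x ∈ S, (if P x then (1:ℤ) else -1) = 2 * (if P x then (1:ℤ) else 0) - 1 := by
    intro x hx; split_ifs <;> ring
  rw [Finset.sum_congr rfl h1, Finset.sum_sub_distrib, Finset.sum_const, ← Finset.mul_sum,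
    Finset.sum_boole, nsmul_eq_mul, mul_one]

section Constr3

variable {m B e' lf n : ℕ}
variable (hm : 2 ≤ m) (he1 : 1 ≤ e') (he2 : e' ≤ m) (hlf : 2*m-1 ≤ lf)
variable (hn : n = B*(2*m-1) + (2*m+2*e'-2) + lf)

include hm he1 he2 hlf hn

lemma hap_total :
    ((range n).filter (Hap m B e')).card = B*m + m + e' := by
  have hT1n : B*(2*m-1) + (2*m+2*e'-2) ≤ n := by omega
  rw [Finset.range_eq_Ico,
    ← Finset.Ico_union_Ico_eq_Ico (Nat.zero_le (B*(2*m-1) + (2*m+2*e'-2))) hT1n,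
    Finset.filter_union, Finset.card_union_of_disjoint
      (Finset.disjoint_filter_filter (Finset.Ico_disjoint_Ico_consecutive _ _ _)),
    ← Finset.Ico_union_Ico_eq_Ico (Nat.zero_le (B*(2*m-1))) (by omega :
        B*(2*m-1) ≤ B*(2*m-1) + (2*m+2*e'-2)),
    Finset.filter_union, Finset.card_union_of_disjoint
      (Finset.disjoint_filter_filter (Finset.Ico_disjoint_Ico_consecutive _ _ _))]
  have c3 : ((Ico (B*(2*m-1) + (2*m+2*e'-2)) n).filter (Hap m B e')).card = 0 := by
    rw [Finset.card_eq_zero]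
    apply Finset.filter_false_of_mem
    intro x hx
    simp only [mem_Ico] at hx
    unfold Hap
    omega
  have c1 : ((Ico 0 (B*(2*m-1))).filter (Hap m B e')).card = B * m := by
    have hc : ∀ x ∈ Ico 0 (B*(2*m-1)), Hap m B e' x ↔ Plt m (x % (2*m-1)) := by
      intro x hx
      simp only [mem_Ico] at hx
      unfold Hap Plt
      omega
    rw [Finset.filter_congr hc, ← Finset.range_eq_Ico]
    exact clique_total hm B
  have c2 : ((Ico (B*(2*m-1)) (B*(2*m-1) + (2*m+2*e'-2))).filter (Hap m B e')).card
      = m + e' := by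
    have hc : ∀ x ∈ Ico (B*(2*m-1)) (B*(2*m-1) + (2*m+2*e'-2)),
        Hap m B e' x ↔ HG e' (2*m+2*e'-2) (x - B*(2*m-1)) := by
      intro x hx
      simp only [mem_Ico] at hx
      unfold Hap
      constructor
      · rintro (⟨h1, -⟩ | ⟨-, -, h⟩)
        · omega
        · exact h
      · intro h
        right
        exact ⟨by omega, by omega, h⟩
    rw [Finset.filter_congr hc]
    have hb : Ico (B*(2*m-1)) (B*(2*m-1) + (2*m+2*e'-2))
        = Ico (0 + B*(2*m-1)) ((2*m+2*e'-2) + B*(2*m-1)) := by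
      congr 1 <;> ring
    rw [hb, cnt_shift (fun x => HG e' (2*m+2*e'-2) (x - B*(2*m-1))) (B*(2*m-1)) 0 (2*m+2*e'-2)]
    have hc2 : ∀ x ∈ Ico 0 (2*m+2*e'-2),
        (HG e' (2*m+2*e'-2) (x + B*(2*m-1) - B*(2*m-1))) ↔ HG e' (2*m+2*e'-2) x := by
      intro x hx
      rw [Nat.add_sub_cancel]
    rw [Finset.filter_congr hc2, ← Finset.range_eq_Ico]
    exact gadget_total hm he1 he2
  rw [c1, c2, c3]
  omega

lemma prop_sum (v : Fin n) (hv : v.val < B*(2*m-1) + (2*m+2*e'-2)) :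
    1 ≤ ∑ u ∈ closedNbhd (GC m B e' lf n) v, fC m B e' n u := by
  have hfv := blk_facts hm he1 he2 hlf hn v.isLt
  rw [closedNbhd_GC hm he1 he2 hlf hn v,
    Finset.sum_image (nbr_inj hm he1 he2 hlf hn v)]
  have hsum : ∑ j ∈ range (2*m-1), fC m B e' n (nbr m B e' lf v j)
      = 2 * (((range (2*m-1)).filter
          (fun j => Hap m B e' ((nbr m B e' lf v j).val))).card : ℤ) - ((2*m-1 : ℕ) : ℤ) := by
    have hs := sum_pm (range (2*m-1)) (fun j => Hap m B e' ((nbr m B e' lf v j).val))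
    rw [Finset.card_range] at hs
    simpa only [fC] using hs
  rw [hsum]
  have hk : m ≤ ((range (2*m-1)).filter
      (fun j => Hap m B e' ((nbr m B e' lf v j).val))).card := by
    by_cases hc : v.val < B*(2*m-1)
    · -- clique block
      have hbs : bsF m B e' v.val = (2*m-1) * (v.val / (2*m-1)) := by
        unfold bsF; rw [if_pos hc]
      have hbl : blF m B e' lf v.val = 2*m-1 := by
        unfold blF; rw [if_pos hc]
      have hbb := blockBound (show 0 < 2*m-1 by omega) hc
      have hcong : ∀ j ∈ range (2*m-1), Hap m B e' ((nbr m B e' lf v j).val) ↔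
          Plt m (((v.val - bsF m B e' v.val + (blF m B e' lf v.val - (m-1))) % (2*m-1) + j)
            % (2*m-1)) := by
        intro j hj
        simp only [mem_range] at hj
        rw [nbr_val hm he1 he2 hlf hn v j]
        set w := (v.val - bsF m B e' v.val + (blF m B e' lf v.val - (m-1)) + j)
          % blF m B e' lf v.val with hw
        have hwlt : w < 2*m-1 := by rw [hw, hbl]; exact Nat.mod_lt _ (by omega)
        have hxmod : (bsF m B e' v.val + w) % (2*m-1) = w := by
          rw [hbs, Nat.mul_add_mod, Nat.mod_eq_of_lt hwlt]
        have hxlt : bsF m B e' v.val + w < B*(2*m-1) := by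
          rw [hbs]; omega
        have hmm : ((v.val - bsF m B e' v.val + (blF m B e' lf v.val - (m-1))) % (2*m-1) + j)
              % (2*m-1)
            = ((v.val - bsF m B e' v.val + (blF m B e' lf v.val - (m-1)))
                % blF m B e' lf v.val + j) % blF m B e' lf v.val := by rw [hbl]
        rw [hmm, Nat.mod_add_mod, ← hw]
        unfold Hap Plt
        constructor
        · rintro (⟨-, h⟩ | ⟨h1, -, -⟩)
          · rwa [hxmod] at h
          · omega
        · intro h
          left
          exact ⟨hxlt, by rwa [hxmod]⟩
      rw [Finset.filter_congr hcong]
      rw [clique_window hm (show (v.val - bsF m B e' v.val + (blF m B e' lf v.val - (m-1)))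
          % (2*m-1) < 2*m-1 from Nat.mod_lt _ (by omega))]
    · -- gadget block
      have hbs : bsF m B e' v.val = B*(2*m-1) := by
        unfold bsF; rw [if_neg hc, if_pos (by omega)]
      have hbl : blF m B e' lf v.val = 2*m+2*e'-2 := by
        unfold blF; rw [if_neg hc, if_pos (by omega)]
      have hcong : ∀ j ∈ range (2*m-1), Hap m B e' ((nbr m B e' lf v j).val) ↔
          HG e' (2*m+2*e'-2)
            (((v.val - bsF m B e' v.val + (blF m B e' lf v.val - (m-1))) % (2*m+2*e'-2) + j)
              % (2*m+2*e'-2)) := by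
        intro j hj
        simp only [mem_range] at hj
        rw [nbr_val hm he1 he2 hlf hn v j]
        set w := (v.val - bsF m B e' v.val + (blF m B e' lf v.val - (m-1)) + j)
          % blF m B e' lf v.val with hw
        have hwlt : w < 2*m+2*e'-2 := by rw [hw, hbl]; exact Nat.mod_lt _ (by omega)
        have hmm : ((v.val - bsF m B e' v.val + (blF m B e' lf v.val - (m-1)))
              % (2*m+2*e'-2) + j) % (2*m+2*e'-2)
            = ((v.val - bsF m B e' v.val + (blF m B e' lf v.val - (m-1)))
                % blF m B e' lf v.val + j) % blF m B e' lf v.val := by rw [hbl]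
        rw [hmm, Nat.mod_add_mod, ← hw]
        unfold Hap
        constructor
        · rintro (⟨h1, -⟩ | ⟨-, -, h⟩)
          · rw [hbs] at h1; omega
          · rw [hbs] at h
            rwa [Nat.add_sub_cancel_left] at h
        · intro h
          right
          refine ⟨by rw [hbs]; omega, by rw [hbs]; omega, ?_⟩
          rw [hbs, Nat.add_sub_cancel_left]
          exact h
      rw [Finset.filter_congr hcong]
      exact gadget_window hm he1 he2 (Nat.mod_lt _ (by omega))
  have hd : (1:ℤ) ≤ 2 * (m:ℤ) - (2*m-1 : ℕ) := by push_cast; omega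
  have : (m:ℤ) ≤ (((range (2*m-1)).filter
      (fun j => Hap m B e' ((nbr m B e' lf v j).val))).card : ℤ) := by exact_mod_cast hk
  omega

end Constr3




section Exist

variable {m B e' lf n : ℕ}
variable (hm : 2 ≤ m) (he1 : 1 ≤ e') (he2 : e' ≤ m) (hlf : 2*m-1 ≤ lf)
variable (hn : n = B*(2*m-1) + (2*m+2*e'-2) + lf)

include hm he1 he2 hlf hn

lemma constr_IsConfig : IsConfig (2*m-1) (B*m + m + e') (GC m B e' lf n) (fC m B e' n) := by
  refine ⟨closedNbhd_GC_card hm he1 he2 hlf hn, ?_, ?_⟩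
  · intro v
    unfold fC
    split_ifs <;> simp
  · have hcong : ∀ v ∈ (univ : Finset (Fin n)),
        (fC m B e' n v = 1) ↔ Hap m B e' v.val := by
      intro v _
      unfold fC
      split_ifs with h
      · simp [h]
      · simp [h]
    rw [Finset.filter_congr hcong, card_fin_filter_val (Hap m B e'),
      hap_total hm he1 he2 hlf hn]

lemma constr_numProp :
    B*(2*m-1) + (2*m+2*e'-2) ≤ numProponents (GC m B e' lf n) (fC m B e' n) := by
  unfold numProponents
  have hsub : (univ : Finset (Fin n)).filter (fun v => Plt (B*(2*m-1) + (2*m+2*e'-2)) v.val)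
      ⊆ univ.filter (fun v => 1 ≤ ∑ u ∈ closedNbhd (GC m B e' lf n) v, fC m B e' n u) := by
    intro v hv
    simp only [mem_filter, mem_univ, true_and] at hv ⊢
    exact prop_sum hm he1 he2 hlf hn v hv
  have hcard := Finset.card_le_card hsub
  rw [card_fin_filter_val (Plt (B*(2*m-1) + (2*m+2*e'-2))),
    range_filter_lt_card _ _ (by omega)] at hcard
  exact hcard

end Exist

/-- The fundamental lower bound by double counting. -/
lemma lower_bound {n d h N1 m : ℕ} (hd : d = 2*m-1) (hm : 1 ≤ m) (hn : n = 2*N1 - 1)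
    (hN1 : 1 ≤ N1) (G : SimpleGraph (Fin n)) (f : Fin n → ℤ)
    (hc : IsConfig d h G f) (ha : IsApproving G f) :
    m * N1 ≤ d * h := by
  obtain ⟨hreg, hpm, hcard⟩ := hc
  have hPn : N1 ≤ numProponents G f := by
    unfold IsApproving at ha
    omega
  have hhn : h ≤ n := by
    rw [← hcard]
    calc (Finset.univ.filter fun v : Fin n => f v = 1).card ≤ (univ : Finset (Fin n)).card :=
      Finset.card_filter_le _ _
    _ = n := by rw [Finset.card_univ, Fintype.card_fin]
  -- the big sum
  set S := ∑ v : Fin n, ∑ u ∈ closedNbhd G v, f u with hS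
  -- swap: S = d * ∑ f
  have hswap : S = ∑ u : Fin n, ((closedNbhd G u).card : ℤ) * f u := by
    rw [hS]
    have h1 : ∀ v : Fin n, ∑ u ∈ closedNbhd G v, f u
        = ∑ u : Fin n, if u = v ∨ G.Adj v u then f u else 0 := by
      intro v
      rw [closedNbhd, Finset.sum_filter]
    rw [Finset.sum_congr rfl (fun v _ => h1 v), Finset.sum_comm]
    apply Finset.sum_congr rfl
    intro u _
    have h2 : ∀ v : Fin n, (if u = v ∨ G.Adj v u then f u else 0)
        = (if v = u ∨ G.Adj u v then f u else 0) := by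
      intro v
      congr 1
      simp only [eq_iff_iff]
      constructor
      · rintro (rfl | hadj); exact Or.inl rfl; exact Or.inr hadj.symm
      · rintro (rfl | hadj); exact Or.inl rfl; exact Or.inr hadj.symm
    rw [Finset.sum_congr rfl (fun v _ => h2 v), ← Finset.sum_filter, ← closedNbhd,
      Finset.sum_const, nsmul_eq_mul]
  have hsumf : ∑ u : Fin n, f u = 2 * (h : ℤ) - n := by
    rw [← Finset.sum_filter_add_sum_filter_not univ (fun v => f v = 1) f]
    have hc1 : ∑ u ∈ univ.filter (fun v : Fin n => f v = 1), f u
        = ∑ u ∈ univ.filter (fun v : Fin n => f v = 1), 1 := by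
      apply Finset.sum_congr rfl
      intro u hu
      simp only [mem_filter] at hu
      rw [hu.2]
    have hc2 : ∑ u ∈ univ.filter (fun v : Fin n => ¬ f v = 1), f u
        = ∑ u ∈ univ.filter (fun v : Fin n => ¬ f v = 1), (-1) := by
      apply Finset.sum_congr rfl
      intro u hu
      simp only [mem_filter] at hu
      rcases hpm u with h1 | h1
      · exact absurd h1 hu.2
      · rw [h1]
    rw [hc1, hc2, Finset.sum_const, Finset.sum_const, hcard]
    have hcc := Finset.card_filter_add_card_filter_not
      (s := (univ : Finset (Fin n))) (p := fun v : Fin n => f v = 1)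
    rw [hcard, Finset.card_univ, Fintype.card_fin] at hcc
    simp only [nsmul_eq_mul, mul_one, mul_neg]
    have : ((univ.filter (fun v : Fin n => ¬ f v = 1)).card : ℤ) = (n : ℤ) - h := by
      omega
    rw [this]
    ring
  have hSval : S = (d : ℤ) * (2 * h - n) := by
    rw [hswap]
    have : ∀ u : Fin n, ((closedNbhd G u).card : ℤ) * f u = (d:ℤ) * f u := by
      intro u
      rw [hreg u]
    rw [Finset.sum_congr rfl (fun u _ => this u), ← Finset.mul_sum, hsumf]
  -- lower estimate for S
  set P := numProponents G f with hP
  have hSlow : ((P : ℤ) * 1 + ((n : ℤ) - P) * (-(d:ℤ))) ≤ S := by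
    rw [hS, ← Finset.sum_filter_add_sum_filter_not univ
      (fun v : Fin n => 1 ≤ ∑ u ∈ closedNbhd G v, f u) (fun v => ∑ u ∈ closedNbhd G v, f u)]
    have hb1 : (P : ℤ) * 1 ≤ ∑ v ∈ univ.filter (fun v : Fin n => 1 ≤ ∑ u ∈ closedNbhd G v, f u),
        ∑ u ∈ closedNbhd G v, f u := by
      rw [mul_one]
      have : (P : ℤ) = ∑ v ∈ univ.filter
          (fun v : Fin n => 1 ≤ ∑ u ∈ closedNbhd G v, f u), (1:ℤ) := by
        rw [Finset.sum_const, nsmul_eq_mul, mul_one, hP]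
        rfl
      rw [this]
      apply Finset.sum_le_sum
      intro v hv
      simp only [mem_filter] at hv
      exact hv.2
    have hb2 : (((n:ℤ) - P) * (-(d:ℤ))) ≤ ∑ v ∈ univ.filter
        (fun v : Fin n => ¬ 1 ≤ ∑ u ∈ closedNbhd G v, f u), ∑ u ∈ closedNbhd G v, f u := by
      have hcc := Finset.card_filter_add_card_filter_not
        (s := (univ : Finset (Fin n)))
        (p := fun v : Fin n => 1 ≤ ∑ u ∈ closedNbhd G v, f u)
      rw [Finset.card_univ, Fintype.card_fin] at hcc
      have hcP : ((univ.filter (fun v : Fin n =>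
          ¬ 1 ≤ ∑ u ∈ closedNbhd G v, f u)).card : ℤ) = (n : ℤ) - P := by
        have : P = (univ.filter (fun v : Fin n => 1 ≤ ∑ u ∈ closedNbhd G v, f u)).card := by
          rw [hP]; rfl
        omega
      have hlow : ∀ v ∈ univ.filter (fun v : Fin n => ¬ 1 ≤ ∑ u ∈ closedNbhd G v, f u),
          (-(d:ℤ)) ≤ ∑ u ∈ closedNbhd G v, f u := by
        intro v _
        have : ∀ u ∈ closedNbhd G v, (-1:ℤ) ≤ f u := by
          intro u _
          rcases hpm u with h1 | h1 <;> omega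
        calc (-(d:ℤ)) = (closedNbhd G v).card • (-1 : ℤ) := by
              rw [nsmul_eq_mul, hreg v]; ring
        _ ≤ ∑ u ∈ closedNbhd G v, f u := Finset.card_nsmul_le_sum _ _ _ this
      calc ((n:ℤ) - P) * (-(d:ℤ))
          = ((univ.filter (fun v : Fin n => ¬ 1 ≤ ∑ u ∈ closedNbhd G v, f u)).card : ℤ)
            * (-(d:ℤ)) := by rw [hcP]
      _ = ∑ v ∈ univ.filter (fun v : Fin n => ¬ 1 ≤ ∑ u ∈ closedNbhd G v, f u), (-(d:ℤ)) := by
            rw [Finset.sum_const, nsmul_eq_mul]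
      _ ≤ _ := Finset.sum_le_sum hlow
    exact add_le_add hb1 hb2
  -- combine
  rw [hSval] at hSlow
  have hPd : (N1 : ℤ) * (1 + d) ≤ (P : ℤ) * (1 + d) := by
    apply mul_le_mul_of_nonneg_right
    · exact_mod_cast hPn
    · positivity
  have hfin : (2:ℤ) * (m * N1) ≤ 2 * (d * h) := by
    have hdm : (1:ℤ) + d = 2 * m := by
      have : (d:ℤ) = 2 * m - 1 := by
        have hm1 : 1 ≤ 2*m := by omega
        push_cast [hd]
        omega
      omega
    nlinarith [hSlow, hPd]
  have : (m : ℤ) * N1 ≤ (d:ℤ) * h := by omega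
  exact_mod_cast this


theorem stmt11' (n d : ℕ) (hn : Odd n) (hd : Odd d) (hnpos : 0 < n) (hdpos : 0 < d)
    (hlow : 2 * d < n + 1) :
    (hmin n d : ℤ) = ⌈(((n : ℚ) + 1) * ((d : ℚ) + 1)) / (4 * (d : ℚ))⌉ := by
  obtain ⟨m0, hm0⟩ := hd
  obtain ⟨N0, hN0⟩ := hn
  set m := m0 + 1 with hmdef
  set N1 := N0 + 1 with hN1def
  clear_value m N1
  have hm1 : d = 2*m - 1 := by omega
  have hn1 : n = 2*N1 - 1 := by omega
  have hdN : d < N1 := by omega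
  set hstar := (N1 * m + d - 1) / d with hstarDef
  clear_value hstar
  have hA := Nat.div_add_mod (N1 * m + d - 1) d
  have hAr := Nat.mod_lt (N1 * m + d - 1) hdpos
  rw [← hstarDef] at hA
  have hA1 : N1 * m ≤ d * hstar := by omega
  have hA2 : d * hstar ≤ N1 * m + d - 1 := by omega
  -- hstar > m
  have hsm : m + 1 ≤ hstar := by
    have h1 : (d+1) * m ≤ N1 * m := Nat.mul_le_mul_right m (by omega)
    have h2 : (d+1) * m = d * m + m := by ring
    have h3 : d * m < d * hstar := by omega
    have h4 := (Nat.mul_lt_mul_left hdpos).mp h3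
    omega
  -- the membership: there is an approving configuration with hstar happy vertices
  have hmem : hstar ∈ {h : ℕ | ∃ (G : SimpleGraph (Fin n)) (f : Fin n → ℤ),
      IsConfig d h G f ∧ IsApproving G f} := by
    simp only [Set.mem_setOf_eq]
    by_cases hm2 : 2 ≤ m
    · -- main case
      set r := hstar % m with hrdef
      set q := hstar / m with hqdef
      have hq : m * q + r = hstar := Nat.div_add_mod hstar m
      have hrm' : r < m := Nat.mod_lt hstar (by omega)
      clear_value r q
      have hrm : r < m := hrm'
      set e' := if r = 0 then m else r with he'def
      set B := if r = 0 then q - 2 else q - 1 with hBdef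
      clear_value e' B
      have he'1 : 1 ≤ e' := by rw [he'def]; split_ifs <;> omega
      have he'2 : e' ≤ m := by rw [he'def]; split_ifs <;> omega
      have hBe : hstar = B*m + m + e' := by
        rw [hBdef, he'def]
        split_ifs with h0
        · have hq2 : 2 ≤ q := by
            by_contra hq2
            have : m * q ≤ m * 1 := Nat.mul_le_mul_left m (by omega)
            omega
          have he : (q-2)*m + m + m = ((q-2)+2)*m := by ring
          have he2 : q - 2 + 2 = q := by omega
          rw [he, he2]
          have hcm : q * m = m * q := Nat.mul_comm q m
          omega
        · have hq1 : 1 ≤ q := by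
            by_contra hq1
            have : m * q = 0 := by
              have : q = 0 := by omega
              rw [this]; ring
            omega
          have he : (q-1)*m + m + r = ((q-1)+1)*m + r := by ring
          have he2 : q - 1 + 1 = q := by omega
          rw [he, he2]
          have hcm : q * m = m * q := Nat.mul_comm q m
          omega
      set T := B*(2*m-1) + (2*m+2*e'-2) with hTdef
      clear_value T
      have hI1 : m*T + m = d*hstar + e' := by
        rw [hTdef, hBe, hm1]
        zify [show (1:ℕ) ≤ 2*m from by omega, show (2:ℕ) ≤ 2*m + 2*e' from by omega]
        ring
      have hG1 : N1 ≤ T := by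
        by_contra hG1
        have h1 : m * (T+1) ≤ m * N1 := Nat.mul_le_mul_left m (by omega)
        have h2 : m * (T+1) = m*T + m := by ring
        have h3 : m * N1 = N1 * m := Nat.mul_comm m N1
        omega
      have hG2 : T ≤ N1 + 1 := by
        by_contra hG2
        have h1 : m * (N1+2) ≤ m * T := Nat.mul_le_mul_left m (by omega)
        have h2 : m * (N1+2) = m*N1 + 2*m := by ring
        have h3 : m * N1 = N1 * m := Nat.mul_comm m N1
        omega
      set lf := n - T with hlfdef
      clear_value lf
      have hTn : T ≤ n := by omega
      have hnlf : n = B*(2*m-1) + (2*m+2*e'-2) + lf := by omega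
      have hlf : 2*m-1 ≤ lf := by
        by_contra hlf
        have hl1 : lf = 2*m - 2 ∧ N1 = d + 1 ∧ T = N1 + 1 := by omega
        obtain ⟨hl2, hl3, hl4⟩ := hl1
        have hB3 : B*(2*m-1) + 2*e' = 3 := by omega
        rcases B with _ | B'
        · simp at hB3; omega
        · have : (B'+1)*(2*m-1) = (2*m-1) + B'*(2*m-1) := by ring
          omega
      refine ⟨GC m B e' lf n, fC m B e' n, ?_, ?_⟩
      · rw [hm1, hBe]
        exact constr_IsConfig hm2 he'1 he'2 hlf hnlf
      · unfold IsApproving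
        have := constr_numProp hm2 he'1 he'2 hlf hnlf
        omega
    · -- d = 1
      have hm1' : m = 1 := by omega
      have hd1 : d = 1 := by omega
      have hstarN : hstar = N1 := by
        rw [hstarDef, hd1, hm1']
        simp
      refine ⟨⊥, (fun v => if Plt N1 v.val then 1 else -1), ⟨?_, ?_, ?_⟩, ?_⟩
      · intro v
        have hnb : closedNbhd (⊥ : SimpleGraph (Fin n)) v = {v} := by
          ext u
          simp [closedNbhd]
        rw [hnb, hd1, Finset.card_singleton]
      · intro v
        by_cases h : Plt N1 v.val <;> simp [h]
      · have hcong : ∀ v ∈ (univ : Finset (Fin n)),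
            ((if Plt N1 v.val then (1:ℤ) else -1) = 1) ↔ Plt N1 v.val := by
          intro v _
          split_ifs with h
          · simp [h]
          · simp [h]
        rw [Finset.filter_congr hcong, card_fin_filter_val (Plt N1),
          range_filter_lt_card N1 n (by omega), hstarN]
      · unfold IsApproving numProponents
        have hcong : ∀ v ∈ (univ : Finset (Fin n)),
            (1 ≤ ∑ u ∈ closedNbhd (⊥ : SimpleGraph (Fin n)) v,
              (if Plt N1 u.val then (1:ℤ) else -1)) ↔ Plt N1 v.val := by
          intro v _
          have hnb : closedNbhd (⊥ : SimpleGraph (Fin n)) v = {v} := by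
            ext u
            simp [closedNbhd]
          rw [hnb, Finset.sum_singleton]
          by_cases h : Plt N1 v.val
          · simp [h]
          · simp [h]
        rw [Finset.filter_congr hcong, card_fin_filter_val (Plt N1),
          range_filter_lt_card N1 n (by omega)]
        omega
  -- the lower bound
  have hlb : ∀ h' ∈ {h : ℕ | ∃ (G : SimpleGraph (Fin n)) (f : Fin n → ℤ),
      IsConfig d h G f ∧ IsApproving G f}, hstar ≤ h' := by
    intro h' hh'
    simp only [Set.mem_setOf_eq] at hh'
    obtain ⟨G, f, hcfg, happ⟩ := hh'
    have hlow := lower_bound hm1 (by omega) hn1 (by omega) G f hcfg happ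
    by_contra hcon
    have h1 : d * (h' + 1) ≤ d * hstar := Nat.mul_le_mul_left d (by omega)
    have h2 : d * (h' + 1) = d * h' + d := by ring
    have h3 : m * N1 = N1 * m := Nat.mul_comm m N1
    omega
  have hkey : hmin n d = hstar := by
    unfold hmin
    have hne : {h : ℕ | ∃ (G : SimpleGraph (Fin n)) (f : Fin n → ℤ),
        IsConfig d h G f ∧ IsApproving G f}.Nonempty := ⟨hstar, hmem⟩
    exact le_antisymm (Nat.sInf_le hmem) (hlb _ (Nat.sInf_mem hne))
  rw [hkey]
  -- now the ceiling computation
  have hQ : (((n : ℚ)) + 1) * ((d : ℚ) + 1) / (4 * (d:ℚ)) = ((N1 * m : ℕ) : ℚ) / ((d : ℕ) : ℚ) := by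
    have e1 : ((n:ℚ) + 1) = 2 * (N1 : ℚ) := by
      have : ((n + 1 : ℕ) : ℚ) = ((2 * N1 : ℕ) : ℚ) := by
        rw [show n + 1 = 2 * N1 from by omega]
      push_cast at this
      linarith
    have e2 : ((d:ℚ) + 1) = 2 * (m : ℚ) := by
      have : ((d + 1 : ℕ) : ℚ) = ((2 * m : ℕ) : ℚ) := by
        rw [show d + 1 = 2 * m from by omega]
      push_cast at this
      linarith
    have hd0 : (d : ℚ) ≠ 0 := by
      exact_mod_cast hdpos.ne'
    rw [e1, e2]
    push_cast
    field_simp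
    ring
  rw [hQ]
  symm
  rw [Int.ceil_eq_iff]
  constructor
  · rw [lt_div_iff₀ (by exact_mod_cast hdpos : (0:ℚ) < ((d:ℕ):ℚ))]
    have hc1 : ((d * hstar : ℕ) : ℚ) < ((N1 * m : ℕ) : ℚ) + ((d:ℕ):ℚ) := by
      exact_mod_cast (show d * hstar < N1 * m + d by omega)
    push_cast at hc1 ⊢
    nlinarith [hc1]
  · rw [div_le_iff₀ (by exact_mod_cast hdpos : (0:ℚ) < ((d:ℕ):ℚ))]
    have hc2 : ((N1 * m : ℕ) : ℚ) ≤ ((d * hstar : ℕ) : ℚ) := by exact_mod_cast hA1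
    push_cast at hc2 ⊢
    nlinarith [hc2]

/-- for low-degree classes, `hmin(n,d) = ⌈(n+1)(d+1)/(4d)⌉`. -/
theorem stmt11 (n d : ℕ) (hn : Odd n) (hd : Odd d) (hnpos : 0 < n) (hdpos : 0 < d)
    (hlow : 2 * d < n + 1) :
    (hmin n d : ℤ) = ⌈(((n : ℚ) + 1) * ((d : ℚ) + 1)) / (4 * (d : ℚ))⌉ :=
  stmt11' n d hn hd hnpos hdpos hlow
end

section
/- For every odd positive integer n, hmin(n) = (n + 2 + (n mod 4))/4 + [n ∈ {5, 9}], where [·] equals 1 if the condition holds and 0 otherwise. In particular, hmin(n) = (n+3)/4 if n ≡ 1 (mod 4) and n ∉ {5, 9}, and hmin(n) = (n+5)/4 if n ≡ 3 (mod 4). -/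
open Finset
open scoped Classical

section Basic
variable {n : ℕ} {G : SimpleGraph (Fin n)}

lemma mem_closedNbhd {v u : Fin n} : u ∈ closedNbhd G v ↔ (u = v ∨ G.Adj v u) := by
  simp [closedNbhd]

lemma self_mem_closedNbhd (v : Fin n) : v ∈ closedNbhd G v := mem_closedNbhd.2 (Or.inl rfl)

lemma closedNbhd_comm {v u : Fin n} : u ∈ closedNbhd G v ↔ v ∈ closedNbhd G u := by
  rw [mem_closedNbhd, mem_closedNbhd]
  constructor
  · rintro (h | h)
    · exact Or.inl h.symm
    · exact Or.inr h.symm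
  · rintro (h | h)
    · exact Or.inl h.symm
    · exact Or.inr h.symm

/-- Double counting edges (with loops) between two sets. -/
lemma doubleCount (S T : Finset (Fin n)) :
    ∑ v ∈ S, (closedNbhd G v ∩ T).card = ∑ u ∈ T, (closedNbhd G u ∩ S).card := by
  have h1 : ∀ (A : Finset (Fin n)) (B : Finset (Fin n)),
      (A ∩ B).card = ∑ u ∈ B, if u ∈ A then 1 else 0 := by
    intro A B
    rw [Finset.sum_ite_mem]
    simp [Finset.inter_comm]
  calc ∑ v ∈ S, (closedNbhd G v ∩ T).card
      = ∑ v ∈ S, ∑ u ∈ T, if u ∈ closedNbhd G v then 1 else 0 := by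
        simp_rw [h1]
    _ = ∑ u ∈ T, ∑ v ∈ S, if u ∈ closedNbhd G v then 1 else 0 := Finset.sum_comm
    _ = ∑ u ∈ T, ∑ v ∈ S, if v ∈ closedNbhd G u then 1 else 0 := by
        apply Finset.sum_congr rfl; intro u _
        apply Finset.sum_congr rfl; intro v _
        simp_rw [closedNbhd_comm (v := v) (u := u)]
    _ = ∑ u ∈ T, (closedNbhd G u ∩ S).card := by simp_rw [h1]

/-- sum of ±1 values over a set. -/
lemma sum_f_eq (f : Fin n → ℤ) (hf : ∀ v, f v = 1 ∨ f v = -1) (S : Finset (Fin n)) :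
    ∑ u ∈ S, f u = 2 * ((S ∩ Finset.univ.filter fun v => f v = 1).card : ℤ) - S.card := by
  have key : ∀ u ∈ S, f u = 2 * (if u ∈ Finset.univ.filter (fun v => f v = 1) then (1:ℤ) else 0) - 1 := by
    intro u _
    rcases hf u with h | h <;> simp [h]
  rw [Finset.sum_congr rfl key, Finset.sum_sub_distrib, ← Finset.mul_sum,
    Finset.sum_ite_mem, Finset.sum_const]
  simp

end Basic

section LB
variable {n : ℕ} {G : SimpleGraph (Fin n)} {f : Fin n → ℤ} {d h : ℕ}

lemma general_LB (hn : 0 < n) (hc : IsConfig d h G f) (ha : IsApproving G f) :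
    n + 2 ≤ 4 * h := by
  classical
  obtain ⟨hreg, hpm, hH⟩ := hc
  set H : Finset (Fin n) := Finset.univ.filter (fun v => f v = 1) with hHdef
  set P : Finset (Fin n) := Finset.univ.filter
    (fun v => 1 ≤ ∑ u ∈ closedNbhd G v, f u) with hPdef
  have hPcard : n + 1 ≤ 2 * P.card := ha
  have hd1 : 1 ≤ d := by
    have v0 : Fin n := ⟨0, hn⟩
    rw [← hreg v0]
    exact Finset.card_pos.2 ⟨v0, self_mem_closedNbhd v0⟩
  have key : ∀ v ∈ P, d + 1 ≤ 2 * (closedNbhd G v ∩ H).card := by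
    intro v hv
    have h1 : 1 ≤ ∑ u ∈ closedNbhd G v, f u := (Finset.mem_filter.1 hv).2
    rw [sum_f_eq f hpm] at h1
    rw [hreg v] at h1
    rw [← hHdef] at h1
    omega
  have step1 : P.card * (d + 1) ≤ 2 * ∑ v ∈ P, (closedNbhd G v ∩ H).card := by
    rw [Finset.mul_sum]
    calc P.card * (d+1) = ∑ _v ∈ P, (d+1) := by rw [Finset.sum_const, smul_eq_mul, mul_comm]
    _ ≤ _ := Finset.sum_le_sum key
  have step2 : ∑ v ∈ P, (closedNbhd G v ∩ H).card ≤ h * d := by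
    calc ∑ v ∈ P, (closedNbhd G v ∩ H).card
        ≤ ∑ v ∈ Finset.univ, (closedNbhd G v ∩ H).card :=
          Finset.sum_le_sum_of_subset (Finset.subset_univ P)
      _ = ∑ u ∈ H, (closedNbhd G u ∩ Finset.univ).card := doubleCount Finset.univ H
      _ = ∑ u ∈ H, d := by
          apply Finset.sum_congr rfl; intro u _
          rw [Finset.inter_univ]; exact hreg u
      _ = h * d := by rw [Finset.sum_const, smul_eq_mul, hH]
  have main : (n + 1) * (d + 1) ≤ 4 * h * d := by
    calc (n+1) * (d+1) ≤ (2 * P.card) * (d+1) := by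
          exact Nat.mul_le_mul_right _ hPcard
      _ = 2 * (P.card * (d+1)) := by ring
      _ ≤ 2 * (2 * (h * d)) := by
          apply Nat.mul_le_mul_left
          calc P.card * (d+1) ≤ 2 * ∑ v ∈ P, (closedNbhd G v ∩ H).card := step1
          _ ≤ 2 * (h * d) := Nat.mul_le_mul_left _ step2
      _ = 4 * h * d := by ring
  nlinarith [main, hd1]

end LB

section Circ

def circ (n m : ℕ) : SimpleGraph (Fin n) where
  Adj u v := u ≠ v ∧ ((u.val + n - v.val) % n ≤ m ∨ (v.val + n - u.val) % n ≤ m)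
  symm := by
    constructor
    rintro u v ⟨h1, h2⟩
    exact ⟨h1.symm, h2.symm⟩
  loopless := by constructor; rintro v ⟨h, -⟩; exact h rfl

lemma delta_eq {n : ℕ} (x y : ℕ) (hx : x < n) (hy : y < n) :
    (x + n - y) % n = if y ≤ x then x - y else x + n - y := by
  split_ifs with h
  · have h2 : x + n - y = n + (x - y) := by omega
    rw [h2, Nat.add_mod_left, Nat.mod_eq_of_lt (by omega)]
  · exact Nat.mod_eq_of_lt (by omega)

lemma mem_circ_closedNbhd {n m : ℕ} (hm : 2 * m + 1 ≤ n) (v u : Fin n) :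
    u ∈ closedNbhd (circ n m) v ↔
      ((u.val + n - v.val) % n ≤ m ∨ n - m ≤ (u.val + n - v.val) % n) := by
  rw [mem_closedNbhd]
  have hu := u.isLt
  have hv := v.isLt
  have hAdj : (circ n m).Adj v u ↔ (v ≠ u ∧
      ((v.val + n - u.val) % n ≤ m ∨ (u.val + n - v.val) % n ≤ m)) := Iff.rfl
  rw [hAdj, Fin.ext_iff, ne_eq, Fin.ext_iff,
    delta_eq u.val v.val hu hv, delta_eq v.val u.val hv hu]
  split_ifs <;> omega

lemma circ_card {n m : ℕ} (hm : 2 * m + 1 ≤ n) (v : Fin n) :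
    (closedNbhd (circ n m) v).card = 2 * m + 1 := by
  classical
  have hn : 0 < n := by omega
  have hcard : (closedNbhd (circ n m) v).card =
      ((Finset.range n).filter (fun δ => δ ≤ m ∨ n - m ≤ δ)).card := by
    apply Finset.card_nbij' (i := fun u => (u.val + n - v.val) % n)
      (j := fun δ => (⟨(δ + v.val) % n, Nat.mod_lt _ hn⟩ : Fin n))
    · intro u hu
      rw [Finset.mem_coe, mem_circ_closedNbhd hm] at hu
      simp only [Finset.mem_coe, Finset.mem_filter, Finset.mem_range]
      exact ⟨Nat.mod_lt _ hn, hu⟩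
    · intro δ hδ
      simp only [Finset.mem_coe, Finset.mem_filter, Finset.mem_range] at hδ
      rw [Finset.mem_coe, mem_circ_closedNbhd hm]
      have key : (((δ + v.val) % n) + n - v.val) % n = δ := by
        have h1 : ((δ + v.val) % n) + n - v.val = ((δ + v.val) % n) + (n - v.val) := by
          have := v.isLt; omega
        rw [h1, Nat.mod_add_mod]
        have h2 : δ + v.val + (n - v.val) = δ + n := by have := v.isLt; omega
        rw [h2, Nat.add_mod_right, Nat.mod_eq_of_lt hδ.1]
      rw [key]
      exact hδ.2
    · intro u hu
      apply Fin.ext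
      simp only
      rw [Nat.mod_add_mod]
      have h2 : u.val + n - v.val + v.val = u.val + n := by have := v.isLt; omega
      rw [h2, Nat.add_mod_right, Nat.mod_eq_of_lt u.isLt]
    · intro δ hδ
      simp only [Finset.mem_coe, Finset.mem_filter, Finset.mem_range] at hδ
      have h1 : ((δ + v.val) % n) + n - v.val = ((δ + v.val) % n) + (n - v.val) := by
        have := v.isLt; omega
      simp only
      rw [h1, Nat.mod_add_mod]
      have h2 : δ + v.val + (n - v.val) = δ + n := by have := v.isLt; omega
      rw [h2, Nat.add_mod_right, Nat.mod_eq_of_lt hδ.1]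
  rw [hcard]
  have hsplit : (Finset.range n).filter (fun δ => δ ≤ m ∨ n - m ≤ δ) =
      Finset.range (m+1) ∪ Finset.Ico (n-m) n := by
    ext δ
    simp only [Finset.mem_filter, Finset.mem_range, Finset.mem_union, Finset.mem_Ico]
    omega
  rw [hsplit, Finset.card_union_of_disjoint, Finset.card_range, Nat.card_Ico]
  · omega
  · rw [Finset.disjoint_left]
    intro a ha hb
    simp only [Finset.mem_range] at ha
    simp only [Finset.mem_Ico] at hb
    omega

/-- every odd d in [1,n] admits an approving configuration (all vertices happy). -/
lemma hmin_set_nonempty {n d : ℕ} (hn : 0 < n) (hd : Odd d) (hdn : d ≤ n) :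
    IsConfig d n (circ n ((d-1)/2)) (fun _ => 1) ∧ IsApproving (circ n ((d-1)/2)) (fun _ => 1) := by
  obtain ⟨m, rfl⟩ := hd
  have hm : 2 * m + 1 ≤ n := by omega
  have hd' : 2 * m + 1 - 1 = 2 * m := by omega
  have hmm : (2 * m + 1 - 1) / 2 = m := by omega
  rw [hmm]
  have hcard := circ_card hm
  refine ⟨⟨hcard, fun v => Or.inl rfl, by simp⟩, ?_⟩
  have : numProponents (circ n m) (fun _ => 1) = n := by
    unfold numProponents
    have : ∀ v : Fin n, (1:ℤ) ≤ ∑ _u ∈ closedNbhd (circ n m) v, (1:ℤ) := by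
      intro v
      rw [Finset.sum_const, hcard v]
      simp
    rw [Finset.filter_true_of_mem (fun v _ => this v)]
    simp
  unfold IsApproving
  omega

end Circ

section Helpers
variable {n : ℕ}

lemma filter_val_card (p : ℕ → Prop) [DecidablePred p] :
    ((Finset.univ : Finset (Fin n)).filter (fun u => p u.val)).card
      = ((Finset.range n).filter p).card := by
  apply Finset.card_nbij (i := fun u => u.val)
  · intro u hu
    simp only [Finset.mem_coe, Finset.mem_filter, Finset.mem_univ, true_and] at hu
    simp only [Finset.mem_coe, Finset.mem_filter, Finset.mem_range]
    exact ⟨u.isLt, hu⟩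
  · intro u hu v hv huv
    exact Fin.ext huv
  · intro a ha
    simp only [Finset.coe_filter, Set.mem_setOf_eq, Finset.mem_range] at ha
    exact ⟨⟨a, ha.1⟩, by simp [ha.2], rfl⟩

lemma closedNbhd_eq {G : SimpleGraph (Fin n)} {v : Fin n} (p : ℕ → Prop) [DecidablePred p]
    (h : ∀ u : Fin n, (u = v ∨ G.Adj v u) ↔ p u.val) :
    closedNbhd G v = Finset.univ.filter (fun u => p u.val) := by
  ext u
  simp only [mem_closedNbhd, Finset.mem_filter, Finset.mem_univ, true_and]
  exact h u

lemma proponent_of_happy_card {G : SimpleGraph (Fin n)} {f : Fin n → ℤ}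
    (hpm : ∀ v, f v = 1 ∨ f v = -1) {v : Fin n} {d : ℕ}
    (hN : (closedNbhd G v).card = d)
    (hH : d + 1 ≤ 2 * (closedNbhd G v ∩ Finset.univ.filter (fun u => f u = 1)).card) :
    1 ≤ ∑ u ∈ closedNbhd G v, f u := by
  rw [sum_f_eq f hpm, hN]
  push_cast
  omega

end Helpers

section ConsB
-- construction for n = 4k+3 : d = 2k+1, h = k+2
variable {n k : ℕ}

def gB (n k : ℕ) : SimpleGraph (Fin n) where
  Adj u v := u ≠ v ∧
    ((u.val < 2*k+2 ∧ v.val < 2*k+2 ∧ u.val + (k+1) ≠ v.val ∧ v.val + (k+1) ≠ u.val)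
      ∨ (2*k+2 ≤ u.val ∧ 2*k+2 ≤ v.val))
  symm := by
    constructor
    rintro u v ⟨h1, h2⟩
    refine ⟨h1.symm, ?_⟩
    tauto
  loopless := by constructor; rintro v ⟨h, -⟩; exact h rfl

def fB (n k : ℕ) : Fin n → ℤ := fun u => if u.val < k+2 then 1 else -1

lemma gB_nbhd_lo (hn : n = 4*k+3) (v : Fin n) (hv : v.val < 2*k+2) :
    closedNbhd (gB n k) v = Finset.univ.filter
      (fun u => u.val < 2*k+2 ∧
        u.val ≠ (if v.val < k+1 then v.val + (k+1) else v.val - (k+1))) := by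
  apply closedNbhd_eq (p := fun a => a < 2*k+2 ∧
    a ≠ (if v.val < k+1 then v.val + (k+1) else v.val - (k+1)))
  intro u
  have hu := u.isLt
  have hvlt := v.isLt
  have hAdj : (gB n k).Adj v u ↔ (v ≠ u ∧
    ((v.val < 2*k+2 ∧ u.val < 2*k+2 ∧ v.val + (k+1) ≠ u.val ∧ u.val + (k+1) ≠ v.val)
      ∨ (2*k+2 ≤ v.val ∧ 2*k+2 ≤ u.val))) := Iff.rfl
  rw [hAdj, Fin.ext_iff, ne_eq, Fin.ext_iff]
  split_ifs <;> omega

lemma gB_nbhd_hi (hn : n = 4*k+3) (v : Fin n) (hv : 2*k+2 ≤ v.val) :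
    closedNbhd (gB n k) v = Finset.univ.filter (fun u => 2*k+2 ≤ u.val) := by
  apply closedNbhd_eq (p := fun a => 2*k+2 ≤ a)
  intro u
  have hu := u.isLt
  have hvlt := v.isLt
  have hAdj : (gB n k).Adj v u ↔ (v ≠ u ∧
    ((v.val < 2*k+2 ∧ u.val < 2*k+2 ∧ v.val + (k+1) ≠ u.val ∧ u.val + (k+1) ≠ v.val)
      ∨ (2*k+2 ≤ v.val ∧ 2*k+2 ≤ u.val))) := Iff.rfl
  rw [hAdj, Fin.ext_iff, ne_eq, Fin.ext_iff]
  omega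

lemma gB_reg (hn : n = 4*k+3) (v : Fin n) :
    (closedNbhd (gB n k) v).card = 2*k+1 := by
  rcases lt_or_ge v.val (2*k+2) with hv | hv
  · rw [gB_nbhd_lo hn v hv, filter_val_card (fun a => a < 2*k+2 ∧
      a ≠ (if v.val < k+1 then v.val + (k+1) else v.val - (k+1)))]
    set pt := (if v.val < k+1 then v.val + (k+1) else v.val - (k+1)) with hpt
    have hptlt : pt < 2*k+2 := by rw [hpt]; split_ifs <;> omega
    have : (Finset.range n).filter (fun a => a < 2*k+2 ∧ a ≠ pt)
        = (Finset.range (2*k+2)).erase pt := by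
      ext a
      simp only [Finset.mem_filter, Finset.mem_range, Finset.mem_erase]
      omega
    rw [this, Finset.card_erase_of_mem (by simp [hptlt]), Finset.card_range]
    omega
  · rw [gB_nbhd_hi hn v hv, filter_val_card (fun a => 2*k+2 ≤ a)]
    have : (Finset.range n).filter (fun a => 2*k+2 ≤ a) = Finset.Ico (2*k+2) n := by
      ext a
      simp only [Finset.mem_filter, Finset.mem_range, Finset.mem_Ico]
      omega
    rw [this, Nat.card_Ico]
    omega

lemma consB (hn : n = 4*k+3) :
    IsConfig (2*k+1) (k+2) (gB n k) (fB n k) ∧ IsApproving (gB n k) (fB n k) := by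
  classical
  have hHset : (Finset.univ.filter (fun v => fB n k v = 1)) =
      Finset.univ.filter (fun u : Fin n => u.val < k+2) := by
    ext u
    simp only [Finset.mem_filter, Finset.mem_univ, true_and]; simp only [fB]
    split_ifs <;> simp_all
  have hHcard : (Finset.univ.filter (fun v => fB n k v = 1)).card = k+2 := by
    rw [hHset, filter_val_card (fun a => a < k+2)]
    have : (Finset.range n).filter (fun a => a < k+2) = Finset.range (k+2) := by
      ext a
      simp only [Finset.mem_filter, Finset.mem_range]
      omega
    rw [this, Finset.card_range]
  have hpm : ∀ v, fB n k v = 1 ∨ fB n k v = -1 := by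
    intro v; unfold fB; split_ifs <;> simp
  have hprop : ∀ v : Fin n, v.val < 2*k+2 → 1 ≤ ∑ u ∈ closedNbhd (gB n k) v, fB n k u := by
    intro v hv
    apply proponent_of_happy_card hpm (gB_reg hn v)
    rw [hHset, gB_nbhd_lo hn v hv]
    set pt := (if v.val < k+1 then v.val + (k+1) else v.val - (k+1)) with hpt
    have hinter : (Finset.univ.filter (fun u : Fin n => u.val < 2*k+2 ∧ u.val ≠ pt)) ∩
          (Finset.univ.filter (fun u : Fin n => u.val < k+2))
        = Finset.univ.filter (fun u : Fin n => (u.val < 2*k+2 ∧ u.val ≠ pt) ∧ u.val < k+2) := by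
      ext u
      simp only [Finset.mem_inter, Finset.mem_filter, Finset.mem_univ, true_and]
    have hsub : ((Finset.range (k+2)).erase pt).card ≤
        ((Finset.univ.filter (fun u : Fin n => u.val < 2*k+2 ∧ u.val ≠ pt)) ∩
          (Finset.univ.filter (fun u : Fin n => u.val < k+2))).card := by
      rw [hinter, filter_val_card (fun a => (a < 2*k+2 ∧ a ≠ pt) ∧ a < k+2)]
      apply Finset.card_le_card
      intro a ha
      simp only [Finset.mem_erase, Finset.mem_range] at ha
      simp only [Finset.mem_filter, Finset.mem_range]
      omega
    have : k + 1 ≤ ((Finset.range (k+2)).erase pt).card := by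
      have := Finset.pred_card_le_card_erase (s := Finset.range (k+2)) (a := pt)
      rw [Finset.card_range] at this
      omega
    omega
  have hnum : 2*k+2 ≤ numProponents (gB n k) (fB n k) := by
    unfold numProponents
    have hsub : Finset.univ.filter (fun u : Fin n => u.val < 2*k+2) ⊆
        Finset.univ.filter (fun v => 1 ≤ ∑ u ∈ closedNbhd (gB n k) v, fB n k u) := by
      intro v hv
      simp only [Finset.mem_filter, Finset.mem_univ, true_and] at hv ⊢
      exact hprop v hv
    have hcard : (Finset.univ.filter (fun u : Fin n => u.val < 2*k+2)).card = 2*k+2 := by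
      rw [filter_val_card (fun a => a < 2*k+2)]
      have : (Finset.range n).filter (fun a => a < 2*k+2) = Finset.range (2*k+2) := by
        ext a
        simp only [Finset.mem_filter, Finset.mem_range]
        omega
      rw [this, Finset.card_range]
    calc 2*k+2 = (Finset.univ.filter (fun u : Fin n => u.val < 2*k+2)).card := hcard.symm
    _ ≤ _ := Finset.card_le_card hsub
  refine ⟨⟨gB_reg hn, hpm, hHcard⟩, ?_⟩
  unfold IsApproving
  omega

end ConsB

section ConsA
-- construction for n = 4k+1, k ≥ 3 : d = 2k+1, h = k+1
variable {n k : ℕ}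

def eA (k a b : ℕ) : Prop :=
  (a < 2*k+1 ∧ b < 2*k+1 ∧ (a < k+1 ∨ b < k+1))
  ∨ (k+1 ≤ a ∧ a < 2*k+1 ∧ k+1 ≤ b ∧ b < 2*k+1 ∧
      ¬(b - (k+1) = (a - (k+1)) + 1 ∨ a - (k+1) = (b - (k+1)) + 1 ∨
        (a - (k+1) = 0 ∧ b - (k+1) = k-1) ∨ (b - (k+1) = 0 ∧ a - (k+1) = k-1)))
  ∨ (2*k+1 ≤ a ∧ 2*k+1 ≤ b)
  ∨ (k+1 ≤ a ∧ a < 2*k+1 ∧ (b = 2*k+1 + 2*(a-(k+1)) ∨ b = 2*k+2 + 2*(a-(k+1))))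
  ∨ (k+1 ≤ b ∧ b < 2*k+1 ∧ (a = 2*k+1 + 2*(b-(k+1)) ∨ a = 2*k+2 + 2*(b-(k+1))))

lemma eA_symm {k a b : ℕ} (h : eA k a b) : eA k b a := by
  unfold eA at *
  omega

def gA (n k : ℕ) : SimpleGraph (Fin n) where
  Adj u v := u ≠ v ∧ eA k u.val v.val
  symm := by constructor; rintro u v ⟨h1, h2⟩; exact ⟨h1.symm, eA_symm h2⟩
  loopless := by constructor; rintro v ⟨h, -⟩; exact h rfl

lemma gA_adj_iff (v u : Fin n) : (gA n k).Adj v u ↔ (v ≠ u ∧ eA k v.val u.val) := Iff.rfl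

lemma gA_nbhd_H (hn : n = 4*k+1) (v : Fin n) (hv : v.val < k+1) :
    closedNbhd (gA n k) v = Finset.univ.filter (fun u => u.val < 2*k+1) := by
  apply closedNbhd_eq (p := fun a => a < 2*k+1)
  intro u
  have hu := u.isLt
  have hvlt := v.isLt
  rw [gA_adj_iff, Fin.ext_iff, ne_eq, Fin.ext_iff]
  unfold eA
  omega

lemma gA_nbhd_W (hn : n = 4*k+1) (hk : 3 ≤ k) (v : Fin n)
    (hv1 : k+1 ≤ v.val) (hv2 : v.val < 2*k+1) :
    closedNbhd (gA n k) v = Finset.univ.filter (fun u =>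
      u.val < k+1 ∨ u.val = v.val ∨
      (k+1 ≤ u.val ∧ u.val < 2*k+1 ∧ u.val ≠ v.val ∧
        ¬(u.val - (k+1) = (v.val - (k+1)) + 1 ∨ v.val - (k+1) = (u.val - (k+1)) + 1 ∨
          (v.val - (k+1) = 0 ∧ u.val - (k+1) = k-1) ∨
          (u.val - (k+1) = 0 ∧ v.val - (k+1) = k-1))) ∨
      u.val = 2*k+1 + 2*(v.val-(k+1)) ∨ u.val = 2*k+2 + 2*(v.val-(k+1))) := by
  apply closedNbhd_eq (p := fun a =>
      a < k+1 ∨ a = v.val ∨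
      (k+1 ≤ a ∧ a < 2*k+1 ∧ a ≠ v.val ∧
        ¬(a - (k+1) = (v.val - (k+1)) + 1 ∨ v.val - (k+1) = (a - (k+1)) + 1 ∨
          (v.val - (k+1) = 0 ∧ a - (k+1) = k-1) ∨
          (a - (k+1) = 0 ∧ v.val - (k+1) = k-1))) ∨
      a = 2*k+1 + 2*(v.val-(k+1)) ∨ a = 2*k+2 + 2*(v.val-(k+1)))
  intro u
  have hu := u.isLt
  have hvlt := v.isLt
  rw [gA_adj_iff, Fin.ext_iff, ne_eq, Fin.ext_iff]
  unfold eA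
  omega

lemma gA_nbhd_X (hn : n = 4*k+1) (v : Fin n) (hv : 2*k+1 ≤ v.val) :
    closedNbhd (gA n k) v = Finset.univ.filter (fun u =>
      2*k+1 ≤ u.val ∨ u.val = k+1 + (v.val - (2*k+1))/2) := by
  apply closedNbhd_eq (p := fun a => 2*k+1 ≤ a ∨ a = k+1 + (v.val - (2*k+1))/2)
  intro u
  have hu := u.isLt
  have hvlt := v.isLt
  rw [gA_adj_iff, Fin.ext_iff, ne_eq, Fin.ext_iff]
  unfold eA
  omega

lemma gA_reg (hn : n = 4*k+1) (hk : 3 ≤ k) (v : Fin n) :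
    (closedNbhd (gA n k) v).card = 2*k+1 := by
  have hvlt := v.isLt
  rcases lt_or_ge v.val (k+1) with hv | hv
  · rw [gA_nbhd_H hn v hv, filter_val_card (fun a => a < 2*k+1)]
    have : (Finset.range n).filter (fun a => a < 2*k+1) = Finset.range (2*k+1) := by
      ext a
      simp only [Finset.mem_filter, Finset.mem_range]
      omega
    rw [this, Finset.card_range]
  rcases lt_or_ge v.val (2*k+1) with hv2 | hv2
  · rw [gA_nbhd_W hn hk v hv hv2]
    set t := v.val with ht
    rw [filter_val_card (fun a =>
      a < k+1 ∨ a = t ∨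
      (k+1 ≤ a ∧ a < 2*k+1 ∧ a ≠ t ∧
        ¬(a - (k+1) = (t - (k+1)) + 1 ∨ t - (k+1) = (a - (k+1)) + 1 ∨
          (t - (k+1) = 0 ∧ a - (k+1) = k-1) ∨
          (a - (k+1) = 0 ∧ t - (k+1) = k-1))) ∨
      a = 2*k+1 + 2*(t-(k+1)) ∨ a = 2*k+2 + 2*(t-(k+1)))]
    set c1 := if t = k+1 then 2*k else t-1 with hc1
    set c2 := if t = 2*k then k+1 else t+1 with hc2
    set x1 := 2*k+1 + 2*(t-(k+1)) with hx1
    set x2 := 2*k+2 + 2*(t-(k+1)) with hx2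
    have hc1' : k+1 ≤ c1 ∧ c1 < 2*k+1 := by rw [hc1]; split_ifs <;> omega
    have hc2' : k+1 ≤ c2 ∧ c2 < 2*k+1 := by rw [hc2]; split_ifs <;> omega
    have hdist : t ≠ c1 ∧ t ≠ c2 ∧ c1 ≠ c2 := by
      rw [hc1, hc2]; split_ifs <;> omega
    have hx : 2*k+1 ≤ x1 ∧ x1 < n ∧ 2*k+1 ≤ x2 ∧ x2 < n ∧ x1 ≠ x2 := by
      constructor; · omega
      constructor; · omega
      constructor; · omega
      constructor; · omega
      omega
    have hsplit : (Finset.range n).filter (fun a =>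
        a < k+1 ∨ a = t ∨
        (k+1 ≤ a ∧ a < 2*k+1 ∧ a ≠ t ∧
          ¬(a - (k+1) = (t - (k+1)) + 1 ∨ t - (k+1) = (a - (k+1)) + 1 ∨
            (t - (k+1) = 0 ∧ a - (k+1) = k-1) ∨
            (a - (k+1) = 0 ∧ t - (k+1) = k-1))) ∨
        a = x1 ∨ a = x2)
        = (Finset.range (k+1) ∪ (Finset.Ico (k+1) (2*k+1) \ {t, c1, c2}))
          ∪ {t, x1, x2} := by
      ext a
      simp only [Finset.mem_filter, Finset.mem_range, Finset.mem_union, Finset.mem_sdiff,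
        Finset.mem_Ico, Finset.mem_insert, Finset.mem_singleton]
      rw [hc1, hc2]
      split_ifs <;> omega
    rw [hsplit]
    have htriple : ({t, c1, c2} : Finset ℕ).card = 3 := by
      rw [Finset.card_insert_of_notMem (by
        simp only [Finset.mem_insert, Finset.mem_singleton]; omega),
        Finset.card_insert_of_notMem (by simp only [Finset.mem_singleton]; omega),
        Finset.card_singleton]
    have htriple2 : ({t, x1, x2} : Finset ℕ).card = 3 := by
      rw [Finset.card_insert_of_notMem (by
        simp only [Finset.mem_insert, Finset.mem_singleton]; omega),
        Finset.card_insert_of_notMem (by simp only [Finset.mem_singleton]; omega),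
        Finset.card_singleton]
    have hsub : ({t, c1, c2} : Finset ℕ) ⊆ Finset.Ico (k+1) (2*k+1) := by
      intro a ha
      simp only [Finset.mem_insert, Finset.mem_singleton] at ha
      simp only [Finset.mem_Ico]
      rcases ha with rfl | rfl | rfl <;> omega
    rw [Finset.card_union_of_disjoint, Finset.card_union_of_disjoint,
      Finset.card_sdiff_of_subset hsub, htriple, htriple2, Finset.card_range, Nat.card_Ico]
    · omega
    · rw [Finset.disjoint_left]
      intro a ha hb
      simp only [Finset.mem_range] at ha
      simp only [Finset.mem_sdiff, Finset.mem_Ico] at hb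
      omega
    · rw [Finset.disjoint_left]
      intro a ha hb
      simp only [Finset.mem_union, Finset.mem_range, Finset.mem_sdiff, Finset.mem_Ico,
        Finset.mem_insert, Finset.mem_singleton] at ha hb
      rcases hb with rfl | rfl | rfl <;> omega
  · rw [gA_nbhd_X hn v hv2, filter_val_card (fun a =>
      2*k+1 ≤ a ∨ a = k+1 + (v.val - (2*k+1))/2)]
    set w := k+1 + (v.val - (2*k+1))/2 with hw
    have hwlt : w < 2*k+1 := by omega
    have hsplit : (Finset.range n).filter (fun a => 2*k+1 ≤ a ∨ a = w)
        = Finset.Ico (2*k+1) n ∪ {w} := by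
      ext a
      simp only [Finset.mem_filter, Finset.mem_range, Finset.mem_union, Finset.mem_Ico,
        Finset.mem_singleton]
      omega
    rw [hsplit, Finset.card_union_of_disjoint, Nat.card_Ico, Finset.card_singleton]
    · omega
    · rw [Finset.disjoint_left]
      intro a ha hb
      simp only [Finset.mem_Ico] at ha
      simp only [Finset.mem_singleton] at hb
      omega

def fA (n k : ℕ) : Fin n → ℤ := fun u => if u.val < k+1 then 1 else -1

lemma consA (hn : n = 4*k+1) (hk : 3 ≤ k) :
    IsConfig (2*k+1) (k+1) (gA n k) (fA n k) ∧ IsApproving (gA n k) (fA n k) := by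
  classical
  have hHset : (Finset.univ.filter (fun v => fA n k v = 1)) =
      Finset.univ.filter (fun u : Fin n => u.val < k+1) := by
    ext u
    simp only [Finset.mem_filter, Finset.mem_univ, true_and]; simp only [fA]
    split_ifs <;> simp_all
  have hHcard : (Finset.univ.filter (fun v => fA n k v = 1)).card = k+1 := by
    rw [hHset, filter_val_card (fun a => a < k+1)]
    have : (Finset.range n).filter (fun a => a < k+1) = Finset.range (k+1) := by
      ext a
      simp only [Finset.mem_filter, Finset.mem_range]
      omega
    rw [this, Finset.card_range]
  have hpm : ∀ v, fA n k v = 1 ∨ fA n k v = -1 := by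
    intro v; unfold fA; split_ifs <;> simp
  have hprop : ∀ v : Fin n, v.val < 2*k+1 → 1 ≤ ∑ u ∈ closedNbhd (gA n k) v, fA n k u := by
    intro v hv
    apply proponent_of_happy_card hpm (gA_reg hn hk v)
    rw [hHset]
    have hsub : Finset.univ.filter (fun u : Fin n => u.val < k+1) ⊆ closedNbhd (gA n k) v := by
      intro u hu
      simp only [Finset.mem_filter, Finset.mem_univ, true_and] at hu
      rcases lt_or_ge v.val (k+1) with hv1 | hv1
      · rw [gA_nbhd_H hn v hv1]
        simp only [Finset.mem_filter, Finset.mem_univ, true_and]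
        omega
      · rw [gA_nbhd_W hn hk v hv1 hv]
        simp only [Finset.mem_filter, Finset.mem_univ, true_and]
        omega
    have hint : closedNbhd (gA n k) v ∩ Finset.univ.filter (fun u : Fin n => u.val < k+1)
        = Finset.univ.filter (fun u : Fin n => u.val < k+1) :=
      Finset.inter_eq_right.2 hsub
    rw [hint, filter_val_card (fun a => a < k+1)]
    have : (Finset.range n).filter (fun a => a < k+1) = Finset.range (k+1) := by
      ext a
      simp only [Finset.mem_filter, Finset.mem_range]
      omega
    rw [this, Finset.card_range]
    omega
  have hnum : 2*k+1 ≤ numProponents (gA n k) (fA n k) := by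
    unfold numProponents
    have hsub : Finset.univ.filter (fun u : Fin n => u.val < 2*k+1) ⊆
        Finset.univ.filter (fun v => 1 ≤ ∑ u ∈ closedNbhd (gA n k) v, fA n k u) := by
      intro v hv
      simp only [Finset.mem_filter, Finset.mem_univ, true_and] at hv ⊢
      exact hprop v hv
    have hcard : (Finset.univ.filter (fun u : Fin n => u.val < 2*k+1)).card = 2*k+1 := by
      rw [filter_val_card (fun a => a < 2*k+1)]
      have : (Finset.range n).filter (fun a => a < 2*k+1) = Finset.range (2*k+1) := by
        ext a
        simp only [Finset.mem_filter, Finset.mem_range]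
        omega
      rw [this, Finset.card_range]
    calc 2*k+1 = (Finset.univ.filter (fun u : Fin n => u.val < 2*k+1)).card := hcard.symm
    _ ≤ _ := Finset.card_le_card hsub
  refine ⟨⟨gA_reg hn hk, hpm, hHcard⟩, ?_⟩
  unfold IsApproving
  omega

end ConsA

section Small

def f5 : Fin 5 → ℤ := fun u => if u.val < 3 then 1 else -1

lemma cons5 : IsConfig 1 3 (circ 5 0) f5 ∧ IsApproving (circ 5 0) f5 := by
  classical
  have hnb : ∀ v : Fin 5, closedNbhd (circ 5 0) v = {v} := by
    intro v
    have hc := circ_card (n := 5) (m := 0) (by norm_num) v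
    rw [Finset.card_eq_one] at hc
    obtain ⟨a, ha⟩ := hc
    have := self_mem_closedNbhd (G := circ 5 0) v
    rw [ha] at this ⊢
    simp only [Finset.mem_singleton] at this
    rw [this]
  have hpm : ∀ v, f5 v = 1 ∨ f5 v = -1 := by
    intro v; unfold f5; split_ifs <;> simp
  have hH : (Finset.univ.filter (fun v => f5 v = 1)).card = 3 := by
    have : (Finset.univ.filter (fun v => f5 v = 1)) = ({0, 1, 2} : Finset (Fin 5)) := by
      ext u
      simp only [Finset.mem_filter, Finset.mem_univ, true_and, f5]
      fin_cases u <;> decide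
    rw [this]; decide
  refine ⟨⟨fun v => by rw [circ_card (by norm_num) v], hpm, hH⟩, ?_⟩
  have hnum : 3 ≤ numProponents (circ 5 0) f5 := by
    unfold numProponents
    have hsub : ({0, 1, 2} : Finset (Fin 5)) ⊆
        Finset.univ.filter (fun v => 1 ≤ ∑ u ∈ closedNbhd (circ 5 0) v, f5 u) := by
      intro v hv
      simp only [Finset.mem_filter, Finset.mem_univ, true_and]
      rw [hnb v, Finset.sum_singleton]
      fin_cases hv <;> decide
    calc 3 = ({0,1,2} : Finset (Fin 5)).card := by decide
    _ ≤ _ := Finset.card_le_card hsub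
  unfold IsApproving
  omega

def f9 : Fin 9 → ℤ := fun u => if u.val = 0 ∨ u.val = 1 ∨ u.val = 3 ∨ u.val = 4 then 1 else -1

lemma cons9 : IsConfig 3 4 (circ 9 1) f9 ∧ IsApproving (circ 9 1) f9 := by
  classical
  have hm : 2 * 1 + 1 ≤ 9 := by norm_num
  have hnb : ∀ v : Fin 9, closedNbhd (circ 9 1) v =
      Finset.univ.filter (fun u : Fin 9 =>
        (u.val + 9 - v.val) % 9 ≤ 1 ∨ 9 - 1 ≤ (u.val + 9 - v.val) % 9) := by
    intro v
    ext u
    rw [mem_circ_closedNbhd hm]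
    simp only [Finset.mem_filter, Finset.mem_univ, true_and]
  have hpm : ∀ v, f9 v = 1 ∨ f9 v = -1 := by
    intro v; unfold f9; split_ifs <;> simp
  have hH : (Finset.univ.filter (fun v => f9 v = 1)).card = 4 := by
    have : (Finset.univ.filter (fun v => f9 v = 1)) = ({0, 1, 3, 4} : Finset (Fin 9)) := by
      ext u
      simp only [Finset.mem_filter, Finset.mem_univ, true_and, f9]
      fin_cases u <;> decide
    rw [this]; decide
  refine ⟨⟨fun v => by rw [circ_card hm v], hpm, hH⟩, ?_⟩
  have hprop : ∀ v ∈ ({0, 1, 2, 3, 4} : Finset (Fin 9)),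
      1 ≤ ∑ u ∈ closedNbhd (circ 9 1) v, f9 u := by
    intro v hv
    rw [hnb v]
    fin_cases hv <;> decide
  have hnum : 5 ≤ numProponents (circ 9 1) f9 := by
    unfold numProponents
    have hsub : ({0, 1, 2, 3, 4} : Finset (Fin 9)) ⊆
        Finset.univ.filter (fun v => 1 ≤ ∑ u ∈ closedNbhd (circ 9 1) v, f9 u) := by
      intro v hv
      simp only [Finset.mem_filter, Finset.mem_univ, true_and]
      exact hprop v hv
    calc 5 = ({0,1,2,3,4} : Finset (Fin 9)).card := by decide
    _ ≤ _ := Finset.card_le_card hsub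
  unfold IsApproving
  omega

end Small

section SpecialLB
variable {n : ℕ} {G : SimpleGraph (Fin n)} {f : Fin n → ℤ} {d h : ℕ}

lemma happy_card_of_prop (hreg : ∀ v, (closedNbhd G v).card = d)
    (hpm : ∀ v, f v = 1 ∨ f v = -1) {v : Fin n}
    (hv : 1 ≤ ∑ u ∈ closedNbhd G v, f u) :
    d + 1 ≤ 2 * (closedNbhd G v ∩ Finset.univ.filter (fun u => f u = 1)).card := by
  rw [sum_f_eq f hpm, hreg] at hv
  omega

lemma count_ineq (hc : IsConfig d h G f) (ha : IsApproving G f) :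
    (n+1)*(d+1) ≤ 4*h*d := by
  classical
  obtain ⟨hreg, hpm, hH⟩ := hc
  set H : Finset (Fin n) := Finset.univ.filter (fun v => f v = 1) with hHdef
  set P : Finset (Fin n) := Finset.univ.filter
    (fun v => 1 ≤ ∑ u ∈ closedNbhd G v, f u) with hPdef
  have hPcard : n + 1 ≤ 2 * P.card := ha
  have key : ∀ v ∈ P, d + 1 ≤ 2 * (closedNbhd G v ∩ H).card := by
    intro v hv
    exact happy_card_of_prop hreg hpm (Finset.mem_filter.1 hv).2
  have step1 : P.card * (d + 1) ≤ 2 * ∑ v ∈ P, (closedNbhd G v ∩ H).card := by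
    rw [Finset.mul_sum]
    calc P.card * (d+1) = ∑ _v ∈ P, (d+1) := by rw [Finset.sum_const, smul_eq_mul, mul_comm]
    _ ≤ _ := Finset.sum_le_sum key
  have step2 : ∑ v ∈ P, (closedNbhd G v ∩ H).card ≤ h * d := by
    calc ∑ v ∈ P, (closedNbhd G v ∩ H).card
        ≤ ∑ v ∈ Finset.univ, (closedNbhd G v ∩ H).card :=
          Finset.sum_le_sum_of_subset (Finset.subset_univ P)
      _ = ∑ u ∈ H, (closedNbhd G u ∩ Finset.univ).card := doubleCount Finset.univ H
      _ = ∑ u ∈ H, d := by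
          apply Finset.sum_congr rfl; intro u _
          rw [Finset.inter_univ]; exact hreg u
      _ = h * d := by rw [Finset.sum_const, smul_eq_mul, hH]
  calc (n+1) * (d+1) ≤ (2 * P.card) * (d+1) := Nat.mul_le_mul_right _ hPcard
    _ = 2 * (P.card * (d+1)) := by ring
    _ ≤ 2 * (2 * (h * d)) := by
        apply Nat.mul_le_mul_left
        calc P.card * (d+1) ≤ 2 * ∑ v ∈ P, (closedNbhd G v ∩ H).card := step1
        _ ≤ 2 * (h * d) := Nat.mul_le_mul_left _ step2
    _ = 4 * h * d := by ring

/-- If `v` is a proponent and `d = 2h-1`, the whole happy set lies in `N[v]`. -/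
lemma H_subset_nbhd (hreg : ∀ v, (closedNbhd G v).card = d)
    (hpm : ∀ v, f v = 1 ∨ f v = -1)
    (hH : (Finset.univ.filter (fun u => f u = 1)).card = h)
    (hd : 2 * h ≤ d + 1) {v : Fin n}
    (hv : 1 ≤ ∑ u ∈ closedNbhd G v, f u) :
    Finset.univ.filter (fun u => f u = 1) ⊆ closedNbhd G v := by
  have h1 := happy_card_of_prop hreg hpm hv
  have h2 : (closedNbhd G v ∩ Finset.univ.filter (fun u => f u = 1)) ⊆
      Finset.univ.filter (fun u => f u = 1) := Finset.inter_subset_right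
  have h3 := Finset.card_le_card h2
  have h4 : (Finset.univ.filter (fun u => f u = 1)).card ≤
      (closedNbhd G v ∩ Finset.univ.filter (fun u => f u = 1)).card := by omega
  have h5 := Finset.eq_of_subset_of_card_le h2 h4
  conv_lhs => rw [← h5]
  exact Finset.inter_subset_left

end SpecialLB

section LB5
variable {G : SimpleGraph (Fin 5)} {f : Fin 5 → ℤ} {d h : ℕ}

lemma lb5 (hd : Odd d) (hc : IsConfig d h G f) (ha : IsApproving G f) : 3 ≤ h := by
  classical
  by_contra hcon
  push_neg at hcon
  have hgen := general_LB (by norm_num) hc ha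
  have hh2 : h = 2 := by omega
  subst hh2
  obtain ⟨hreg, hpm, hH⟩ := hc
  set H : Finset (Fin 5) := Finset.univ.filter (fun u => f u = 1) with hHdef
  -- d = 3
  have hcnt := count_ineq ⟨hreg, hpm, hH⟩ ha
  have hd3 : d = 3 := by
    -- d ≥ 3 from counting, d ≤ 3 since proponents exist and need (d+1)/2 ≤ 2 happy
    have hdge : 3 ≤ d := by nlinarith [hcnt]
    have hP : 1 ≤ 2 * numProponents G f - 5 := by
      have := ha; unfold IsApproving at this; omega
    -- there exists a proponent
    have hPne : (Finset.univ.filter (fun v => 1 ≤ ∑ u ∈ closedNbhd G v, f u)).Nonempty := by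
      rw [← Finset.card_pos]
      have := ha; unfold IsApproving numProponents at this; omega
    obtain ⟨v, hv⟩ := hPne
    have h1 := happy_card_of_prop hreg hpm (Finset.mem_filter.1 hv).2
    rw [← hHdef] at h1
    have h2 : (closedNbhd G v ∩ H).card ≤ H.card :=
      Finset.card_le_card Finset.inter_subset_right
    rw [hH] at h2
    omega
  subst hd3
  -- every proponent sees all of H
  have hPsub : ∀ v : Fin 5, 1 ≤ ∑ u ∈ closedNbhd G v, f u → H ⊆ closedNbhd G v := by
    intro v hv
    exact H_subset_nbhd hreg hpm hH (by omega) hv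
  -- H = {a, b}
  obtain ⟨a, b, hab, hHab⟩ := Finset.card_eq_two.1 hH
  set T : Finset (Fin 5) := closedNbhd G a ∩ closedNbhd G b with hTdef
  have hPT : (Finset.univ.filter (fun v => 1 ≤ ∑ u ∈ closedNbhd G v, f u)) ⊆ T := by
    intro v hv
    have hsub := hPsub v (Finset.mem_filter.1 hv).2
    rw [hHab] at hsub
    have hA : a ∈ closedNbhd G v := hsub (by simp)
    have hB : b ∈ closedNbhd G v := hsub (by simp)
    rw [hTdef, Finset.mem_inter]
    exact ⟨closedNbhd_comm.1 hA, closedNbhd_comm.1 hB⟩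
  have hTcard : 3 ≤ T.card := by
    have h1 := Finset.card_le_card hPT
    have := ha; unfold IsApproving numProponents at this
    omega
  have hTa : T = closedNbhd G a := by
    apply Finset.eq_of_subset_of_card_le Finset.inter_subset_left
    rw [hreg a]; exact hTcard
  have hTb : T = closedNbhd G b := by
    apply Finset.eq_of_subset_of_card_le Finset.inter_subset_right
    rw [hreg b]; exact hTcard
  have hTcard3 : T.card = 3 := by rw [hTa, hreg a]
  have haT : a ∈ T := by rw [hTa]; exact self_mem_closedNbhd a
  have hbT : b ∈ T := by rw [hTb]; exact self_mem_closedNbhd b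
  -- w : the third element of T
  have habT : ({a, b} : Finset (Fin 5)) ⊆ T := by
    intro u hu
    simp only [Finset.mem_insert, Finset.mem_singleton] at hu
    rcases hu with rfl | rfl <;> assumption
  have hWcard : (T \ {a, b}).card = 1 := by
    rw [Finset.card_sdiff_of_subset habT, Finset.card_insert_of_notMem (by simpa using hab),
      Finset.card_singleton, hTcard3]
  obtain ⟨w, hw⟩ := Finset.card_eq_one.1 hWcard
  have hwT : w ∈ T := by
    have : w ∈ T \ {a, b} := by rw [hw]; simp
    exact (Finset.mem_sdiff.1 this).1
  have hwab : w ∉ ({a, b} : Finset (Fin 5)) := by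
    have : w ∈ T \ {a, b} := by rw [hw]; simp
    exact (Finset.mem_sdiff.1 this).2
  have hwa : w ≠ a := by intro hh; apply hwab; simp [hh]
  have hwb : w ≠ b := by intro hh; apply hwab; simp [hh]
  have habw_card : ({a, b, w} : Finset (Fin 5)).card = 3 :=
    Finset.card_eq_three.2 ⟨a, b, w, hab, hwa.symm, hwb.symm, rfl⟩
  have hTabw : T = {a, b, w} := by
    apply (Finset.eq_of_subset_of_card_le ?_ ?_).symm
    · intro u hu
      simp only [Finset.mem_insert, Finset.mem_singleton] at hu
      rcases hu with rfl | rfl | rfl <;> assumption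
    · rw [hTcard3, habw_card]
  have hNw : closedNbhd G w = T := by
    symm
    apply Finset.eq_of_subset_of_card_le
    · rw [hTabw]
      intro u hu
      simp only [Finset.mem_insert, Finset.mem_singleton] at hu
      rcases hu with rfl | rfl | rfl
      · exact closedNbhd_comm.1 (by rw [← hTa]; exact hwT)
      · exact closedNbhd_comm.1 (by rw [← hTb]; exact hwT)
      · exact self_mem_closedNbhd _
    · rw [hreg w, hTcard3]
  have hNall : ∀ u, u ∈ T → closedNbhd G u = T := by
    intro u hu
    rw [hTabw] at hu
    simp only [Finset.mem_insert, Finset.mem_singleton] at hu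
    rcases hu with rfl | rfl | rfl
    · exact hTa.symm
    · exact hTb.symm
    · exact hNw
  have hXcard : Tᶜ.card = 2 := by
    rw [Finset.card_compl, hTcard3]
    simp
  obtain ⟨x, hx⟩ : Tᶜ.Nonempty := by rw [← Finset.card_pos, hXcard]; norm_num
  have hNx : closedNbhd G x ⊆ Tᶜ := by
    intro u hu
    rw [Finset.mem_compl]
    intro huT
    have h1 : x ∈ closedNbhd G u := closedNbhd_comm.1 hu
    rw [hNall u huT] at h1
    rw [Finset.mem_compl] at hx
    exact hx h1
  have := Finset.card_le_card hNx
  rw [hreg x, hXcard] at this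
  omega

end LB5

section LB9
variable {G : SimpleGraph (Fin 9)} {f : Fin 9 → ℤ} {d h : ℕ}

lemma lb9 (hd : Odd d) (hc : IsConfig d h G f) (ha : IsApproving G f) : 4 ≤ h := by
  classical
  by_contra hcon
  push_neg at hcon
  have hgen := general_LB (by norm_num) hc ha
  have hh3 : h = 3 := by omega
  subst hh3
  obtain ⟨hreg, hpm, hH⟩ := hc
  set H : Finset (Fin 9) := Finset.univ.filter (fun u => f u = 1) with hHdef
  have hcnt := count_ineq ⟨hreg, hpm, hH⟩ ha
  have hd5 : d = 5 := by
    have hdge : 5 ≤ d := by nlinarith [hcnt]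
    have hPne : (Finset.univ.filter (fun v => 1 ≤ ∑ u ∈ closedNbhd G v, f u)).Nonempty := by
      rw [← Finset.card_pos]
      have := ha; unfold IsApproving numProponents at this; omega
    obtain ⟨v, hv⟩ := hPne
    have h1 := happy_card_of_prop hreg hpm (Finset.mem_filter.1 hv).2
    rw [← hHdef] at h1
    have h2 : (closedNbhd G v ∩ H).card ≤ H.card :=
      Finset.card_le_card Finset.inter_subset_right
    rw [hH] at h2
    omega
  subst hd5
  have hPsub : ∀ v : Fin 9, 1 ≤ ∑ u ∈ closedNbhd G v, f u → H ⊆ closedNbhd G v := by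
    intro v hv
    exact H_subset_nbhd hreg hpm hH (by omega) hv
  obtain ⟨a, b, c, hab, hac, hbc, hHabc⟩ := Finset.card_eq_three.1 hH
  set T : Finset (Fin 9) := closedNbhd G a ∩ (closedNbhd G b ∩ closedNbhd G c) with hTdef
  have hPT : (Finset.univ.filter (fun v => 1 ≤ ∑ u ∈ closedNbhd G v, f u)) ⊆ T := by
    intro v hv
    have hsub := hPsub v (Finset.mem_filter.1 hv).2
    rw [hHabc] at hsub
    have hA : a ∈ closedNbhd G v := hsub (by simp)
    have hB : b ∈ closedNbhd G v := hsub (by simp)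
    have hC : c ∈ closedNbhd G v := hsub (by simp)
    rw [hTdef, Finset.mem_inter, Finset.mem_inter]
    exact ⟨closedNbhd_comm.1 hA, closedNbhd_comm.1 hB, closedNbhd_comm.1 hC⟩
  have hTcard : 5 ≤ T.card := by
    have h1 := Finset.card_le_card hPT
    have := ha; unfold IsApproving numProponents at this
    omega
  have hTa : T = closedNbhd G a := by
    apply Finset.eq_of_subset_of_card_le Finset.inter_subset_left
    rw [hreg a]; exact hTcard
  have hTb : T = closedNbhd G b := by
    apply Finset.eq_of_subset_of_card_le
      (Finset.inter_subset_right.trans Finset.inter_subset_left)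
    rw [hreg b]; exact hTcard
  have hTc : T = closedNbhd G c := by
    apply Finset.eq_of_subset_of_card_le
      (Finset.inter_subset_right.trans Finset.inter_subset_right)
    rw [hreg c]; exact hTcard
  have hTcard5 : T.card = 5 := by rw [hTa, hreg a]
  have haT : a ∈ T := by rw [hTa]; exact self_mem_closedNbhd a
  have hbT : b ∈ T := by rw [hTb]; exact self_mem_closedNbhd b
  have hcT : c ∈ T := by rw [hTc]; exact self_mem_closedNbhd c
  have habcT : ({a, b, c} : Finset (Fin 9)) ⊆ T := by
    intro u hu
    simp only [Finset.mem_insert, Finset.mem_singleton] at hu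
    rcases hu with rfl | rfl | rfl <;> assumption
  have habc_card : ({a, b, c} : Finset (Fin 9)).card = 3 :=
    Finset.card_eq_three.2 ⟨a, b, c, hab, hac, hbc, rfl⟩
  set W : Finset (Fin 9) := T \ {a, b, c} with hWdef
  have hWcard : W.card = 2 := by
    rw [hWdef, Finset.card_sdiff_of_subset habcT, habc_card, hTcard5]
  -- every element of {a,b,c} has N = T
  have hNabc : ∀ u, u ∈ ({a, b, c} : Finset (Fin 9)) → closedNbhd G u = T := by
    intro u hu
    simp only [Finset.mem_insert, Finset.mem_singleton] at hu
    rcases hu with rfl | rfl | rfl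
    · exact hTa.symm
    · exact hTb.symm
    · exact hTc.symm
  -- for w ∈ W : |N[w] \ T| ≤ 1
  have hW1 : ∀ w ∈ W, (closedNbhd G w \ T).card ≤ 1 := by
    intro w hw
    rw [hWdef, Finset.mem_sdiff] at hw
    obtain ⟨hwT, hwabc⟩ := hw
    have hsub : insert w ({a, b, c} : Finset (Fin 9)) ⊆ closedNbhd G w ∩ T := by
      intro u hu
      rw [Finset.mem_inter]
      simp only [Finset.mem_insert, Finset.mem_singleton] at hu
      rcases hu with rfl | rfl | rfl | rfl
      · exact ⟨self_mem_closedNbhd _, hwT⟩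
      · exact ⟨closedNbhd_comm.1 (by rw [← hTa]; exact hwT), haT⟩
      · exact ⟨closedNbhd_comm.1 (by rw [← hTb]; exact hwT), hbT⟩
      · exact ⟨closedNbhd_comm.1 (by rw [← hTc]; exact hwT), hcT⟩
    have hc4 : (insert w ({a, b, c} : Finset (Fin 9))).card = 4 := by
      rw [Finset.card_insert_of_notMem hwabc, habc_card]
    have h5 := Finset.card_le_card hsub
    have h6 := Finset.card_inter_add_card_sdiff (closedNbhd G w) T
    rw [hreg w] at h6
    omega
  -- for x ∉ T : 1 ≤ |N[x] ∩ W|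
  have hX1 : ∀ x ∈ Tᶜ, 1 ≤ (closedNbhd G x ∩ W).card := by
    intro x hx
    rw [Finset.mem_compl] at hx
    have hsub : closedNbhd G x ∩ T ⊆ W := by
      intro u hu
      rw [Finset.mem_inter] at hu
      obtain ⟨hu1, hu2⟩ := hu
      rw [hWdef, Finset.mem_sdiff]
      refine ⟨hu2, ?_⟩
      intro huabc
      have h1 : x ∈ closedNbhd G u := closedNbhd_comm.1 hu1
      rw [hNabc u huabc] at h1
      exact hx h1
    have h6 := Finset.card_inter_add_card_sdiff (closedNbhd G x) T
    rw [hreg x] at h6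
    have h7 : (closedNbhd G x \ T).card ≤ Tᶜ.card := by
      apply Finset.card_le_card
      intro u hu
      rw [Finset.mem_sdiff] at hu
      rw [Finset.mem_compl]
      exact hu.2
    have h8 : Tᶜ.card = 4 := by
      rw [Finset.card_compl, hTcard5]
      simp
    have h9 := Finset.card_le_card hsub
    have h10 : (closedNbhd G x ∩ T).card ≤ (closedNbhd G x ∩ W).card := by
      apply Finset.card_le_card
      intro u hu
      rw [Finset.mem_inter] at hu ⊢
      exact ⟨hu.1, hsub (Finset.mem_inter.2 hu)⟩
    omega
  -- double count
  have hdc := doubleCount (G := G) Tᶜ W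
  have hXcard : Tᶜ.card = 4 := by
    rw [Finset.card_compl, hTcard5]
    simp
  have hlhs : 4 ≤ ∑ x ∈ Tᶜ, (closedNbhd G x ∩ W).card := by
    calc (4:ℕ) = ∑ _x ∈ Tᶜ, 1 := by rw [Finset.sum_const, hXcard]; simp
    _ ≤ _ := Finset.sum_le_sum hX1
  have hrhs : ∑ w ∈ W, (closedNbhd G w ∩ Tᶜ).card ≤ 2 := by
    calc ∑ w ∈ W, (closedNbhd G w ∩ Tᶜ).card ≤ ∑ _w ∈ W, 1 := by
          apply Finset.sum_le_sum
          intro w hw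
          have : closedNbhd G w ∩ Tᶜ = closedNbhd G w \ T := by
            ext u
            simp [Finset.mem_sdiff, Finset.mem_compl, Finset.mem_inter]
          rw [this]
          exact hW1 w hw
    _ = 2 := by rw [Finset.sum_const, hWcard]; simp
  rw [hdc] at hlhs
  omega

end LB9

section Assembly

/-- the target value -/
def tval (n : ℕ) : ℕ := (n + 2 + n % 4) / 4 + (if n = 5 ∨ n = 9 then 1 else 0)

lemma hmin_setne {n d : ℕ} (hnpos : 0 < n) (hd : Odd d) (hdn : d ≤ n) :
    {h : ℕ | ∃ (G : SimpleGraph (Fin n)) (f : Fin n → ℤ),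
      IsConfig d h G f ∧ IsApproving G f}.Nonempty := by
  obtain ⟨hc, ha⟩ := hmin_set_nonempty hnpos hd hdn
  exact ⟨n, _, _, hc, ha⟩

lemma hmin_ge {n d : ℕ} (hn : Odd n) (hnpos : 0 < n) (hd : Odd d) (hdn : d ≤ n) :
    tval n ≤ hmin n d := by
  unfold hmin
  have hmem := Nat.sInf_mem (hmin_setne hnpos hd hdn)
  obtain ⟨G, f, hc, ha⟩ := hmem
  have hgen := general_LB hnpos hc ha
  by_cases h5 : n = 5
  · subst h5
    have := lb5 hd hc ha
    unfold tval
    norm_num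
    omega
  by_cases h9 : n = 9
  · subst h9
    have := lb9 hd hc ha
    unfold tval
    norm_num
    omega
  · unfold tval
    rw [if_neg (by tauto)]
    obtain ⟨m, hm⟩ := hn
    omega

lemma hmin_le {n d h0 : ℕ} (hup : ∃ (G : SimpleGraph (Fin n)) (f : Fin n → ℤ),
    IsConfig d h0 G f ∧ IsApproving G f) : hmin n d ≤ h0 :=
  Nat.sInf_le hup

lemma hminN_eq (n : ℕ) (hn : Odd n) (hnpos : 0 < n) : hminN n = tval n := by
  -- find a d₀ with an optimal construction
  have hmain : ∃ d₀, Odd d₀ ∧ 1 ≤ d₀ ∧ d₀ ≤ n ∧ hmin n d₀ = tval n := by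
    by_cases h5 : n = 5
    · subst h5
      refine ⟨1, odd_one, le_refl 1, by norm_num, le_antisymm ?_ ?_⟩
      · have := hmin_le ⟨circ 5 0, f5, cons5.1, cons5.2⟩
        unfold tval at *
        norm_num
        omega
      · exact hmin_ge hn hnpos odd_one (by norm_num)
    by_cases h9 : n = 9
    · subst h9
      refine ⟨3, ⟨1, by norm_num⟩, by norm_num, by norm_num, le_antisymm ?_ ?_⟩
      · have := hmin_le ⟨circ 9 1, f9, cons9.1, cons9.2⟩
        unfold tval at *
        norm_num
        omega
      · exact hmin_ge hn hnpos ⟨1, by norm_num⟩ (by norm_num)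
    by_cases h1 : n = 1
    · subst h1
      refine ⟨1, odd_one, le_refl 1, le_refl 1, le_antisymm ?_ ?_⟩
      · have h := hmin_setne (n := 1) (d := 1) (by norm_num) odd_one (by norm_num)
        have := hmin_le (Set.mem_setOf.1 (Nat.sInf_mem h))
        -- direct: all-happy config on 1 vertex has h = 1
        obtain ⟨hc, ha⟩ := hmin_set_nonempty (n := 1) (d := 1) (by norm_num) odd_one (by norm_num)
        have := hmin_le ⟨_, _, hc, ha⟩
        unfold tval
        norm_num
        omega
      · exact hmin_ge hn hnpos odd_one (by norm_num)
    rcases Nat.odd_mod_four_iff.1 (Nat.odd_iff.1 hn) with h41 | h43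
    · -- n % 4 = 1, n ≥ 13
      set k := n / 4 with hk
      have hn4 : n = 4 * k + 1 := by omega
      have hk3 : 3 ≤ k := by omega
      obtain ⟨hc, ha⟩ := consA hn4 hk3
      refine ⟨2*k+1, ⟨k, by ring⟩, by omega, by omega, le_antisymm ?_ ?_⟩
      · have := hmin_le ⟨_, _, hc, ha⟩
        unfold tval
        rw [if_neg (by tauto)]
        omega
      · exact hmin_ge hn hnpos ⟨k, by ring⟩ (by omega)
    · -- n % 4 = 3
      set k := n / 4 with hk
      have hn4 : n = 4 * k + 3 := by omega
      obtain ⟨hc, ha⟩ := consB hn4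
      refine ⟨2*k+1, ⟨k, by ring⟩, by omega, by omega, le_antisymm ?_ ?_⟩
      · have := hmin_le ⟨_, _, hc, ha⟩
        unfold tval
        rw [if_neg (by tauto)]
        omega
      · exact hmin_ge hn hnpos ⟨k, by ring⟩ (by omega)
  obtain ⟨d₀, hd₀, hd₀1, hd₀n, hd₀eq⟩ := hmain
  apply le_antisymm
  · exact Nat.sInf_le ⟨d₀, hd₀, hd₀1, hd₀n, hd₀eq.symm⟩
  · have hne : {m : ℕ | ∃ d : ℕ, Odd d ∧ 1 ≤ d ∧ d ≤ n ∧ m = hmin n d}.Nonempty :=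
      ⟨tval n, d₀, hd₀, hd₀1, hd₀n, hd₀eq.symm⟩
    obtain ⟨d, hdo, _, hdn, hmeq⟩ := Nat.sInf_mem hne
    unfold hminN
    rw [hmeq]
    exact hmin_ge hn hnpos hdo hdn

end Assembly

/-- `hmin(n) = (n + 2 + (n mod 4))/4 + [n ∈ {5,9}]`; in particular it is
`(n+3)/4` when `n ≡ 1 (mod 4)` and `n ∉ {5,9}`, and `(n+5)/4` when `n ≡ 3 (mod 4)`. -/
theorem stmt16 (n : ℕ) (hn : Odd n) (hnpos : 0 < n) :
    hminN n = (n + 2 + n % 4) / 4 + (if n = 5 ∨ n = 9 then 1 else 0) ∧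
    (n % 4 = 1 → n ≠ 5 → n ≠ 9 → hminN n = (n + 3) / 4) ∧
    (n % 4 = 3 → hminN n = (n + 5) / 4) := by
  have hmain := hminN_eq n hn hnpos
  unfold tval at hmain
  refine ⟨hmain, ?_, ?_⟩
  · intro h41 h5 h9
    rw [hmain, if_neg (by tauto)]
    omega
  · intro h43
    rw [hmain, if_neg (by omega)]
    omega
end

section
/- Let n be an odd positive integer with n ≡ 3 (mod 8). Then hmin(n) = (n+5)/4, and for every odd d with 1 ≤ d ≤ n: hmin(n, d) = hmin(n) if and only if (n+1)/4 ≤ d ≤ (n+3)/2. -/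
open Finset
open scoped Classical

namespace Stmt19Aux
open Finset

noncomputable def cnn {α : Type*} [Fintype α] (G : SimpleGraph α) (v : α) : Finset α :=
  Finset.univ.filter fun u => u = v ∨ G.Adj v u


lemma odd_count_range (n : ℕ) : ((range n).filter fun j => j % 2 = 1).card = n / 2 := by
  induction n with
  | zero => simp
  | succ n ih =>
    rw [Finset.range_add_one, Finset.filter_insert]
    by_cases h : n % 2 = 1
    · rw [if_pos h, Finset.card_insert_of_notMem (by simp)]
      omega
    · rw [if_neg h]
      omega

lemma key_mod (m w r : ℕ) (hm : 0 < m) (hr : r < m) :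
    (w + (r + (m - w % m)) % m) % m = r := by
  have hwm : w % m < m := Nat.mod_lt _ hm
  have hdiv := Nat.mod_add_div w m
  have h1 : (w + (r + (m - w % m)) % m) % m = (w + (r + (m - w % m))) % m :=
    Nat.add_mod_mod _ _ _
  have h3 : m * (w / m + 1) = m * (w / m) + m := by ring
  have h2 : w + (r + (m - w % m)) = r + m * (w / m + 1) := by omega
  rw [h1, h2, Nat.add_mul_mod_self_left, Nat.mod_eq_of_lt hr]

lemma lap_count (m w : ℕ) (hm : 0 < m) :
    ((range m).filter fun j => (w + j) % m % 2 = 1).card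
      = ((range m).filter fun r => r % 2 = 1).card := by
  apply Finset.card_bij (fun j _ => (w + j) % m)
  · intro a ha
    simp only [mem_filter, mem_range] at ha ⊢
    exact ⟨Nat.mod_lt _ hm, ha.2⟩
  · intro a ha b hb hab
    simp only [mem_filter, mem_range] at ha hb
    exact (Nat.ModEq.add_left_cancel' w hab).eq_of_lt_of_lt ha.1 hb.1
  · intro r hr
    simp only [mem_filter, mem_range] at hr
    exact ⟨(r + (m - w % m)) % m, by
      simp only [mem_filter, mem_range]
      exact ⟨Nat.mod_lt _ hm, by rw [key_mod m w r hm hr.1]; exact hr.2⟩,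
      key_mod m w r hm hr.1⟩

lemma not_adj_odd (m x : ℕ) (hm : Odd m) (h : x % m % 2 = 1) : (x + 1) % m % 2 = 0 := by
  have hm0 : 0 < m := hm.pos
  have hx : x % m < m := Nat.mod_lt _ hm0
  obtain ⟨c, hc⟩ := hm
  have : (x + 1) % m = (x % m + 1) % m := by
    conv_lhs => rw [← Nat.mod_add_mod]
  have hlt : x % m + 1 < m := by omega
  rw [Nat.mod_eq_of_lt hlt] at this
  omega

lemma partial_count (m w t : ℕ) (hm : Odd m) :
    ((range (2 * t)).filter fun j => (w + j) % m % 2 = 1).card ≤ t := by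
  induction t with
  | zero => simp
  | succ t ih =>
    have h2 : 2 * (t + 1) = (2 * t + 1) + 1 := by ring
    rw [h2, Finset.range_add_one, Finset.filter_insert, Finset.range_add_one, Finset.filter_insert]
    by_cases ha : (w + (2 * t)) % m % 2 = 1
    · have hb : ¬ ((w + (2 * t + 1)) % m % 2 = 1) := by
        have h3 := not_adj_odd m (w + 2 * t) hm ha
        have he : w + 2 * t + 1 = w + (2 * t + 1) := by ring
        rw [he] at h3
        omega
      rw [if_neg hb, if_pos ha]
      have h4 := Finset.card_insert_le (2 * t) ((range (2 * t)).filter fun j => (w + j) % m % 2 = 1)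
      omega
    · rw [if_neg ha]
      by_cases hb : (w + (2 * t + 1)) % m % 2 = 1
      · rw [if_pos hb]
        have h4 := Finset.card_insert_le (2 * t + 1) ((range (2 * t)).filter fun j => (w + j) % m % 2 = 1)
        omega
      · rw [if_neg hb]
        omega

lemma window_count (s w t : ℕ) (hts : t ≤ s) :
    ((range (2 * s + 1 + 2 * t)).filter fun j => (w + j) % (2 * s + 1) % 2 = 1).card ≤ s + t := by
  set m := 2 * s + 1 with hmdef
  have hodd : Odd m := ⟨s, by omega⟩
  rw [Finset.range_add, Finset.filter_union]
  refine le_trans (Finset.card_union_le _ _) ?_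
  have h1 : ((range m).filter fun j => (w + j) % m % 2 = 1).card = s := by
    rw [lap_count m w hodd.pos, odd_count_range]
    omega
  have h2 : (((range (2 * t)).map (addLeftEmbedding m)).filter
      fun j => (w + j) % m % 2 = 1).card ≤ t := by
    rw [Finset.filter_map, Finset.card_map]
    have e1 : ∀ x ∈ range (2 * t),
        ((fun j => (w + j) % m % 2 = 1) ∘ (addLeftEmbedding m)) x ↔
          ((w + m) + x) % m % 2 = 1 := by
      intro x _
      simp only [Function.comp, addLeftEmbedding_apply]
      rw [show w + (m + x) = w + m + x by ring]
    rw [Finset.filter_congr e1]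
    exact partial_count m (w + m) t hodd
  omega



lemma circ_symm_aux (M r : ℕ) (hM : 2 * r + 1 ≤ M) (x y : ZMod M)
    (hv : ((x - y) + (r : ZMod M)).val < 2 * r + 1) :
    ((y - x) + (r : ZMod M)).val < 2 * r + 1 := by
  haveI : NeZero M := ⟨by omega⟩
  set t := ((x - y) + (r : ZMod M)).val with ht
  have h1 : (x - y) + (r : ZMod M) = (t : ZMod M) := (ZMod.natCast_rightInverse _).symm
  have h2 : (y - x) + (r : ZMod M) = ((2 * r - t : ℕ) : ZMod M) := by
    have ht2 : t ≤ 2 * r := by omega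
    rw [Nat.cast_sub ht2]
    have h3 : (x - y : ZMod M) = (t : ZMod M) - (r : ZMod M) := by
      rw [← h1]; ring
    rw [show (y - x : ZMod M) = -(x - y) by ring, h3]
    push_cast
    ring
  rw [h2, ZMod.val_cast_of_lt (by omega)]
  omega

def circ (M r : ℕ) (hM : 2 * r + 1 ≤ M) : SimpleGraph (ZMod M) where
  Adj x y := x ≠ y ∧ ((x - y) + (r : ZMod M)).val < 2 * r + 1
  symm := ⟨fun x y ⟨hne, hv⟩ => ⟨hne.symm, circ_symm_aux M r hM x y hv⟩⟩
  loopless := ⟨fun x h => h.1 rfl⟩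

@[simp] lemma circ_adj (M r : ℕ) (hM : 2 * r + 1 ≤ M) (x y : ZMod M) :
    (circ M r hM).Adj x y ↔ x ≠ y ∧ ((x - y) + (r : ZMod M)).val < 2 * r + 1 := Iff.rfl

lemma cnn_circ (M r : ℕ) (hM : 2 * r + 1 ≤ M) [NeZero M] (v : ZMod M) :
    cnn (circ M r hM) v = (range (2 * r + 1)).image
      (fun i : ℕ => v - (r : ZMod M) + (i : ZMod M)) := by
  ext u
  simp only [cnn, mem_filter, mem_univ, true_and, mem_image, mem_range, circ_adj]
  constructor
  · rintro (rfl | ⟨hne, hv⟩)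
    · exact ⟨r, by omega, by ring⟩
    · have hv' := circ_symm_aux M r hM v u hv
      refine ⟨((u - v) + (r : ZMod M)).val, hv', ?_⟩
      have h1 : ((((u - v) + (r : ZMod M)).val : ℕ) : ZMod M) = (u - v) + (r : ZMod M) :=
        ZMod.natCast_rightInverse _
      rw [h1]; ring
  · rintro ⟨i, hi, rfl⟩
    by_cases he : v - (r : ZMod M) + (i : ZMod M) = v
    · exact Or.inl he
    · refine Or.inr ⟨fun h => he h.symm, ?_⟩
      have h2 : v - (v - (r : ZMod M) + (i : ZMod M)) + (r : ZMod M)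
          = ((2 * r - i : ℕ) : ZMod M) := by
        rw [Nat.cast_sub (by omega : i ≤ 2 * r)]
        push_cast
        ring
      rw [h2, ZMod.val_cast_of_lt (by omega)]
      omega

lemma cnn_circ_inj (M r : ℕ) (hM : 2 * r + 1 ≤ M) [NeZero M] (v : ZMod M) :
    Set.InjOn (fun i : ℕ => v - (r : ZMod M) + (i : ZMod M)) (range (2 * r + 1)) := by
  intro i hi j hj hij
  simp only [coe_range, Set.mem_Iio] at hi hj
  simp only at hij
  have h3 : (i : ZMod M) = (j : ZMod M) := by
    calc (i : ZMod M) = v - (r : ZMod M) + (i : ZMod M) - (v - (r : ZMod M)) := by ring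
      _ = v - (r : ZMod M) + (j : ZMod M) - (v - (r : ZMod M)) := by rw [hij]
      _ = (j : ZMod M) := by ring
  have hi' : ((i : ZMod M)).val = i := ZMod.val_cast_of_lt (by omega)
  have hj' : ((j : ZMod M)).val = j := ZMod.val_cast_of_lt (by omega)
  rw [← hi', ← hj', h3]

lemma cnn_circ_card (M r : ℕ) (hM : 2 * r + 1 ≤ M) [NeZero M] (v : ZMod M) :
    (cnn (circ M r hM) v).card = 2 * r + 1 := by
  rw [cnn_circ M r hM v, Finset.card_image_of_injOn (cnn_circ_inj M r hM v), Finset.card_range]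

lemma cnn_circ_sum (M r : ℕ) (hM : 2 * r + 1 ≤ M) [NeZero M] (v : ZMod M) (f : ZMod M → ℤ) :
    ∑ u ∈ cnn (circ M r hM) v, f u
      = ∑ i ∈ range (2 * r + 1), f (v - (r : ZMod M) + (i : ZMod M)) := by
  rw [cnn_circ M r hM v]
  exact Finset.sum_image fun i hi j hj hij => cnn_circ_inj M r hM v hi hj hij



variable {α β : Type*} [Fintype α] [Fintype β]

-- sum graph
def sumGraph (G₁ : SimpleGraph α) (G₂ : SimpleGraph β) : SimpleGraph (α ⊕ β) where
  Adj x y := match x, y with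
    | Sum.inl a, Sum.inl b => G₁.Adj a b
    | Sum.inr a, Sum.inr b => G₂.Adj a b
    | _, _ => False
  symm := by
    refine ⟨?_⟩
    rintro (a | a) (b | b) h <;> simp_all <;> exact h.symm
  loopless := by
    refine ⟨?_⟩
    rintro (a | a) h <;> simp_all <;> exact G₁.loopless a h

@[simp] lemma sumGraph_adj_ll (G₁ : SimpleGraph α) (G₂ : SimpleGraph β) (a b : α) :
    (sumGraph G₁ G₂).Adj (Sum.inl a) (Sum.inl b) ↔ G₁.Adj a b := Iff.rfl
@[simp] lemma sumGraph_adj_rr (G₁ : SimpleGraph α) (G₂ : SimpleGraph β) (a b : β) :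
    (sumGraph G₁ G₂).Adj (Sum.inr a) (Sum.inr b) ↔ G₂.Adj a b := Iff.rfl
@[simp] lemma sumGraph_adj_lr (G₁ : SimpleGraph α) (G₂ : SimpleGraph β) (a : α) (b : β) :
    ¬ (sumGraph G₁ G₂).Adj (Sum.inl a) (Sum.inr b) := fun h => h
@[simp] lemma sumGraph_adj_rl (G₁ : SimpleGraph α) (G₂ : SimpleGraph β) (a : β) (b : α) :
    ¬ (sumGraph G₁ G₂).Adj (Sum.inr a) (Sum.inl b) := fun h => h

lemma card_filter_sum_type (p : α ⊕ β → Prop) [DecidablePred p] :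
    ((univ : Finset (α ⊕ β)).filter p).card
      = ((univ : Finset α).filter fun a => p (Sum.inl a)).card
        + ((univ : Finset β).filter fun b => p (Sum.inr b)).card := by
  rw [Finset.card_filter, Finset.card_filter, Finset.card_filter, Fintype.sum_sum_type]

lemma sum_filter_sum_type (p : α ⊕ β → Prop) [DecidablePred p] (g : α ⊕ β → ℤ) :
    ∑ x ∈ (univ : Finset (α ⊕ β)).filter p, g x
      = ∑ a ∈ (univ : Finset α).filter (fun a => p (Sum.inl a)), g (Sum.inl a)
        + ∑ b ∈ (univ : Finset β).filter (fun b => p (Sum.inr b)), g (Sum.inr b) := by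
  rw [Finset.sum_filter, Finset.sum_filter, Finset.sum_filter, Fintype.sum_sum_type]

lemma cnn_sum_inl (G₁ : SimpleGraph α) (G₂ : SimpleGraph β) (a : α) (x : β) :
    ¬ (Sum.inr x = Sum.inl a ∨ (sumGraph G₁ G₂).Adj (Sum.inl a) (Sum.inr x)) := by
  rintro (h | h)
  · exact Sum.inr_ne_inl h
  · exact h

-- transport along an equiv
lemma card_filter_equiv (e : α ≃ β) (p : β → Prop) :
    ((univ : Finset α).filter fun a => p (e a)).card = ((univ : Finset β).filter p).card := by
  apply Finset.card_bij (fun a _ => e a)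
  · intro a ha; simp only [mem_filter, mem_univ, true_and] at ha ⊢; exact ha
  · intro a _ b _ h; exact e.injective h
  · intro b hb
    simp only [mem_filter, mem_univ, true_and] at hb
    exact ⟨e.symm b, by simpa using hb, by simp⟩

lemma sum_cnn_comap (e : α ≃ β) (G : SimpleGraph β) (f : β → ℤ) (v : α) :
    ∑ u ∈ cnn (SimpleGraph.comap e G) v, f (e u) = ∑ w ∈ cnn G (e v), f w := by
  apply Finset.sum_bij (fun a _ => e a)
  · intro a ha
    simp only [cnn, mem_filter, mem_univ, true_and, SimpleGraph.comap_adj] at ha ⊢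
    rcases ha with h | h
    · exact Or.inl (by rw [h])
    · exact Or.inr h
  · intro a _ b _ h; exact e.injective h
  · intro w hw
    simp only [cnn, mem_filter, mem_univ, true_and] at hw ⊢
    refine ⟨e.symm w, ?_, by simp⟩
    rcases hw with h | h
    · exact Or.inl (by rw [h]; simp)
    · exact Or.inr (by simpa using h)
  · intro a _; rfl

lemma card_cnn_comap (e : α ≃ β) (G : SimpleGraph β) (v : α) :
    (cnn (SimpleGraph.comap e G) v).card = (cnn G (e v)).card := by
  apply Finset.card_bij (fun a _ => e a)
  · intro a ha
    simp only [cnn, mem_filter, mem_univ, true_and, SimpleGraph.comap_adj] at ha ⊢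
    rcases ha with h | h
    · exact Or.inl (by rw [h])
    · exact Or.inr h
  · intro a _ b _ h; exact e.injective h
  · intro w hw
    simp only [cnn, mem_filter, mem_univ, true_and] at hw ⊢
    refine ⟨e.symm w, ?_, by simp⟩
    rcases hw with h | h
    · exact Or.inl (by rw [h]; simp)
    · exact Or.inr (by simpa using h)

-- sum of a ±1 function
lemma sum_pm (S : Finset α) (f : α → ℤ) (hf : ∀ x, f x = 1 ∨ f x = -1) :
    ∑ x ∈ S, f x = (S.card : ℤ) - 2 * ((S.filter fun x => f x = -1).card : ℤ) := by
  have h1 : ∀ x ∈ S, f x = if f x = -1 then (-1 : ℤ) else 1 := by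
    intro x _
    rcases hf x with h | h <;> simp [h]
  rw [Finset.sum_congr rfl h1, Finset.sum_ite, Finset.sum_const, Finset.sum_const]
  have h2 := Finset.card_filter_add_card_filter_not (s := S) (p := fun x => f x = -1)
  simp only [nsmul_eq_mul, mul_one, mul_neg]
  omega



variable {α : Type*} [Fintype α]

lemma double_count (G : SimpleGraph α) (f : α → ℤ) (d : ℕ)
    (hreg : ∀ v, (cnn G v).card = d) :
    ∑ v : α, (((cnn G v).filter fun u => f u = 1).card : ℕ)
      = ((univ : Finset α).filter fun u => f u = 1).card * d := by
  have step1 : ∀ v : α, ((cnn G v).filter fun u => f u = 1).card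
      = ∑ u : α, if (u = v ∨ G.Adj v u) ∧ f u = 1 then 1 else 0 := by
    intro v
    rw [cnn, Finset.filter_filter, Finset.card_filter]
  calc ∑ v : α, (((cnn G v).filter fun u => f u = 1).card : ℕ)
      = ∑ v : α, ∑ u : α, if (u = v ∨ G.Adj v u) ∧ f u = 1 then 1 else 0 := by
        exact Finset.sum_congr rfl fun v _ => step1 v
    _ = ∑ u : α, ∑ v : α, if (u = v ∨ G.Adj v u) ∧ f u = 1 then 1 else 0 := Finset.sum_comm
    _ = ∑ u : α, if f u = 1 then (∑ v : α, if (u = v ∨ G.Adj v u) then 1 else 0) else 0 := by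
        refine Finset.sum_congr rfl fun u _ => ?_
        by_cases h : f u = 1
        · rw [if_pos h]
          refine Finset.sum_congr rfl fun v _ => ?_
          by_cases h2 : u = v ∨ G.Adj v u
          · rw [if_pos ⟨h2, h⟩, if_pos h2]
          · rw [if_neg (fun hc => h2 hc.1), if_neg h2]
        · rw [if_neg h, Finset.sum_eq_zero]
          intro v _
          rw [if_neg (fun hc => h hc.2)]
    _ = ∑ u ∈ (univ : Finset α).filter fun u => f u = 1,
          (∑ v : α, if (u = v ∨ G.Adj v u) then 1 else 0) := by
        rw [Finset.sum_filter]
    _ = ∑ u ∈ (univ : Finset α).filter fun u => f u = 1, d := by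
        refine Finset.sum_congr rfl fun u _ => ?_
        rw [← Finset.card_filter]
        rw [← hreg u, cnn]
        apply Finset.card_bij (fun v _ => v)
        · intro v hv
          simp only [mem_filter, mem_univ, true_and] at hv ⊢
          rcases hv with h | h
          · exact Or.inl h.symm
          · exact Or.inr (G.adj_symm h)
        · intro a _ b _ h; exact h
        · intro v hv
          simp only [mem_filter, mem_univ, true_and] at hv ⊢
          refine ⟨v, ?_, rfl⟩
          rcases hv with h | h
          · exact Or.inl h.symm
          · exact Or.inr (G.adj_symm h)
    _ = ((univ : Finset α).filter fun u => f u = 1).card * d := by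
        rw [Finset.sum_const, smul_eq_mul]

lemma prop_happy (G : SimpleGraph α) (f : α → ℤ) (d : ℕ) (v : α)
    (hpm : ∀ x, f x = 1 ∨ f x = -1)
    (hcard : (cnn G v).card = d)
    (hprop : 1 ≤ ∑ u ∈ cnn G v, f u) :
    d + 1 ≤ 2 * ((cnn G v).filter fun u => f u = 1).card := by
  have hs := sum_pm (cnn G v) f hpm
  have hsplit := Finset.card_filter_add_card_filter_not
    (s := cnn G v) (p := fun x => f x = -1)
  have heq : ((cnn G v).filter fun x => ¬ f x = -1) = ((cnn G v).filter fun x => f x = 1) := by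
    apply Finset.filter_congr
    intro x _
    rcases hpm x with h | h <;> simp [h]
  rw [heq] at hsplit
  rw [hcard] at hs hsplit
  omega



lemma closedNbhd_eq {n : ℕ} (G : SimpleGraph (Fin n)) (v : Fin n) :
    closedNbhd G v = cnn G v := by
  ext u; simp [closedNbhd, cnn]

lemma card_filter_iff {α : Type*} [Fintype α] {p q : α → Prop}
    [DecidablePred p] [DecidablePred q] (h : ∀ x, p x ↔ q x) :
    ((univ : Finset α).filter p).card = ((univ : Finset α).filter q).card := by
  rw [Finset.filter_congr (fun x _ => h x)]

lemma card_filter_equiv' {α β : Type*} [Fintype α] [Fintype β] (e : α ≃ β)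
    {p : β → Prop} {q : α → Prop} [DecidablePred p] [DecidablePred q]
    (h : ∀ a, q a ↔ p (e a)) :
    ((univ : Finset α).filter q).card = ((univ : Finset β).filter p).card := by
  apply Finset.card_bij (fun a _ => e a)
  · intro a ha; simp only [mem_filter, mem_univ, true_and] at ha ⊢
    exact (h a).mp ha
  · intro a _ b _ hab; exact e.injective hab
  · intro b hb
    simp only [mem_filter, mem_univ, true_and] at hb
    exact ⟨e.symm b, by simp only [mem_filter, mem_univ, true_and, h (e.symm b),
      Equiv.apply_symm_apply]; exact hb, by simp⟩

lemma lb_main {n d h : ℕ} (G : SimpleGraph (Fin n)) (f : Fin n → ℤ)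
    (hc : IsConfig d h G f) (ha : IsApproving G f) :
    (n + 1) * (d + 1) ≤ 4 * (h * d) ∧ d + 1 ≤ 2 * h := by
  obtain ⟨hreg, hpm, hcard⟩ := hc
  have hreg' : ∀ v, (cnn G v).card = d := fun v => by rw [← closedNbhd_eq]; exact hreg v
  have hbr : ((univ : Finset (Fin n)).filter fun v => 1 ≤ ∑ u ∈ closedNbhd G v, f u).card
      = ((univ : Finset (Fin n)).filter fun v => 1 ≤ ∑ u ∈ cnn G v, f u).card :=
    card_filter_iff (fun v => by rw [closedNbhd_eq])
  have ha' : n < 2 * ((univ : Finset (Fin n)).filter fun v =>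
      1 ≤ ∑ u ∈ cnn G v, f u).card := by
    have ha2 := ha
    unfold IsApproving numProponents at ha2
    omega
  set P := (univ : Finset (Fin n)).filter fun v => 1 ≤ ∑ u ∈ cnn G v, f u with hP
  have hprop : ∀ v ∈ P, d + 1 ≤ 2 * ((cnn G v).filter fun u => f u = 1).card := by
    intro v hv
    simp only [hP, mem_filter, mem_univ, true_and] at hv
    exact prop_happy G f d v hpm (hreg' v) hv
  have hsum1 : (d + 1) * P.card ≤ 2 * ∑ v ∈ P, ((cnn G v).filter fun u => f u = 1).card := by
    rw [Finset.mul_sum]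
    calc (d + 1) * P.card = ∑ _v ∈ P, (d + 1) := by rw [Finset.sum_const, smul_eq_mul, mul_comm]
      _ ≤ ∑ v ∈ P, 2 * ((cnn G v).filter fun u => f u = 1).card :=
        Finset.sum_le_sum hprop
  have hsum2 : ∑ v ∈ P, ((cnn G v).filter fun u => f u = 1).card
      ≤ ∑ v : Fin n, ((cnn G v).filter fun u => f u = 1).card :=
    Finset.sum_le_sum_of_subset (Finset.filter_subset _ _)
  have hdc := double_count G f d hreg'
  rw [hdc] at hsum2
  have hhh : ((univ : Finset (Fin n)).filter fun u => f u = 1).card = h := hcard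
  rw [hhh] at hsum2
  constructor
  · have h1 : (n + 1) * (d + 1) ≤ (2 * P.card) * (d + 1) :=
      Nat.mul_le_mul_right _ (by omega)
    have h2 : (2 * P.card) * (d + 1) = 2 * ((d + 1) * P.card) := by ring
    omega
  · have hPne : P.Nonempty := by
      rw [← Finset.card_pos]
      omega
    obtain ⟨v, hv⟩ := hPne
    have h4 := hprop v hv
    have h5 : ((cnn G v).filter fun u => f u = 1).card
        ≤ ((univ : Finset (Fin n)).filter fun u => f u = 1).card := by
      apply Finset.card_le_card
      intro u hu
      simp only [mem_filter, mem_univ, true_and] at hu ⊢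
      exact hu.2
    omega

lemma zmod_filter_card (M : ℕ) [NeZero M] (p : ℕ → Prop) [DecidablePred p]
    {q : ZMod M → Prop} [DecidablePred q] (hq : ∀ x, q x ↔ p x.val) :
    ((univ : Finset (ZMod M)).filter q).card = ((range M).filter p).card := by
  apply Finset.card_bij (fun x _ => x.val)
  · intro x hx
    simp only [mem_filter, mem_univ, true_and, mem_range] at hx ⊢
    exact ⟨ZMod.val_lt x, (hq x).mp hx⟩
  · intro a _ b _ hab
    exact ZMod.val_injective M hab
  · intro j hj
    simp only [mem_filter, mem_range] at hj
    refine ⟨(j : ZMod M), ?_, ?_⟩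
    · simp only [mem_filter, mem_univ, true_and]
      rw [hq, ZMod.val_cast_of_lt hj.1]
      exact hj.2
    · rw [ZMod.val_cast_of_lt hj.1]

-- packaging: transfer a construction on a fintype β to Fin n
lemma package {n d h : ℕ} {β : Type} [Fintype β] (hcardβ : Fintype.card β = n)
    (G' : SimpleGraph β) (f' : β → ℤ)
    (hreg : ∀ w, (cnn G' w).card = d)
    (hpm : ∀ w, f' w = 1 ∨ f' w = -1)
    (hh : ((univ : Finset β).filter fun w => f' w = 1).card = h)
    (hprop : n < 2 * ((univ : Finset β).filter fun w => 1 ≤ ∑ u ∈ cnn G' w, f' u).card) :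
    ∃ (G : SimpleGraph (Fin n)) (f : Fin n → ℤ), IsConfig d h G f ∧ IsApproving G f := by
  have e : Fin n ≃ β := Fintype.equivOfCardEq (by rw [Fintype.card_fin, hcardβ])
  refine ⟨SimpleGraph.comap e G', fun v => f' (e v), ⟨?_, ?_, ?_⟩, ?_⟩
  · intro v
    rw [closedNbhd_eq, card_cnn_comap e G' v]
    exact hreg (e v)
  · intro v; exact hpm (e v)
  · rw [← hh]
    exact card_filter_equiv' e (fun a => Iff.rfl)
  · unfold IsApproving numProponents
    beta_reduce
    have key : ((univ : Finset (Fin n)).filter fun v =>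
        1 ≤ ∑ u ∈ closedNbhd (SimpleGraph.comap (⇑e) G') v, f' (e u)).card
        = ((univ : Finset β).filter fun w => 1 ≤ ∑ u ∈ cnn G' w, f' u).card := by
      apply card_filter_equiv' e
      intro v
      rw [closedNbhd_eq, sum_cnn_comap e G' f' v]
    omega

lemma filter_univ_iff {α : Type*} [Fintype α] {p q : α → Prop}
    [DecidablePred p] [DecidablePred q] (h : ∀ x, p x ↔ q x) :
    (univ : Finset α).filter p = (univ : Finset α).filter q := by
  ext x; simp only [mem_filter, mem_univ, true_and, h x]

section SumGraphCnn
variable {α β : Type*} [Fintype α] [Fintype β]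

lemma cnn_sumGraph_inl (G₁ : SimpleGraph α) (G₂ : SimpleGraph β) (a : α) :
    cnn (sumGraph G₁ G₂) (Sum.inl a)
      = (cnn G₁ a).map ⟨Sum.inl, Sum.inl_injective⟩ := by
  ext u
  cases u with
  | inl x =>
    simp only [cnn, mem_filter, mem_univ, true_and, Finset.mem_map,
      Function.Embedding.coeFn_mk, sumGraph_adj_ll]
    constructor
    · rintro (h | h)
      · exact ⟨x, Or.inl (Sum.inl_injective h), rfl⟩
      · exact ⟨x, Or.inr h, rfl⟩
    · rintro ⟨y, hy, hy2⟩
      cases Sum.inl_injective hy2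
      rcases hy with h | h
      · exact Or.inl (by rw [h])
      · exact Or.inr h
  | inr x =>
    simp only [cnn, mem_filter, mem_univ, true_and, Finset.mem_map,
      Function.Embedding.coeFn_mk]
    constructor
    · intro h
      exact absurd h (cnn_sum_inl G₁ G₂ a x)
    · rintro ⟨y, _, hy2⟩
      exact (Sum.inl_ne_inr hy2).elim

lemma cnn_sumGraph_inr (G₁ : SimpleGraph α) (G₂ : SimpleGraph β) (a : β) :
    cnn (sumGraph G₁ G₂) (Sum.inr a)
      = (cnn G₂ a).map ⟨Sum.inr, Sum.inr_injective⟩ := by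
  ext u
  cases u with
  | inr x =>
    simp only [cnn, mem_filter, mem_univ, true_and, Finset.mem_map,
      Function.Embedding.coeFn_mk, sumGraph_adj_rr]
    constructor
    · rintro (h | h)
      · exact ⟨x, Or.inl (Sum.inr_injective h), rfl⟩
      · exact ⟨x, Or.inr h, rfl⟩
    · rintro ⟨y, hy, hy2⟩
      cases Sum.inr_injective hy2
      rcases hy with h | h
      · exact Or.inl (by rw [h])
      · exact Or.inr h
  | inl x =>
    simp only [cnn, mem_filter, mem_univ, true_and, Finset.mem_map,
      Function.Embedding.coeFn_mk]
    constructor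
    · rintro (h | h)
      · exact (Sum.inl_ne_inr h).elim
      · exact absurd h (sumGraph_adj_rl G₁ G₂ a x)
    · rintro ⟨y, _, hy2⟩
      exact (Sum.inr_ne_inl hy2).elim

lemma cnn_sumGraph_inl_card (G₁ : SimpleGraph α) (G₂ : SimpleGraph β) (a : α) :
    (cnn (sumGraph G₁ G₂) (Sum.inl a)).card = (cnn G₁ a).card := by
  rw [cnn_sumGraph_inl, Finset.card_map]

lemma cnn_sumGraph_inr_card (G₁ : SimpleGraph α) (G₂ : SimpleGraph β) (a : β) :
    (cnn (sumGraph G₁ G₂) (Sum.inr a)).card = (cnn G₂ a).card := by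
  rw [cnn_sumGraph_inr, Finset.card_map]

lemma cnn_sumGraph_inl_sum (G₁ : SimpleGraph α) (G₂ : SimpleGraph β) (a : α) (g : α ⊕ β → ℤ) :
    ∑ u ∈ cnn (sumGraph G₁ G₂) (Sum.inl a), g u = ∑ x ∈ cnn G₁ a, g (Sum.inl x) := by
  rw [cnn_sumGraph_inl, Finset.sum_map]
  rfl

lemma cnn_sumGraph_inr_sum (G₁ : SimpleGraph α) (G₂ : SimpleGraph β) (a : β) (g : α ⊕ β → ℤ) :
    ∑ u ∈ cnn (sumGraph G₁ G₂) (Sum.inr a), g u = ∑ x ∈ cnn G₂ a, g (Sum.inr x) := by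
  rw [cnn_sumGraph_inr, Finset.sum_map]
  rfl

end SumGraphCnn

lemma range_sad_count (s : ℕ) :
    ((range (4 * s + 2)).filter fun j => j % (2 * s + 1) % 2 = 1).card = 2 * s := by
  set m := 2 * s + 1 with hm
  have h4 : 4 * s + 2 = m + m := by omega
  rw [h4, Finset.range_add, Finset.filter_union]
  rw [Finset.card_union_of_disjoint]
  · have h1 : ((range m).filter fun j => j % m % 2 = 1).card = s := by
      rw [Finset.filter_congr (fun j hj => by
        rw [Nat.mod_eq_of_lt (Finset.mem_range.mp hj)])]
      rw [odd_count_range]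
      omega
    have h2 : (((range m).map (addLeftEmbedding m)).filter fun j => j % m % 2 = 1).card
        = s := by
      rw [Finset.filter_map, Finset.card_map]
      rw [Finset.filter_congr (fun j hj => by
        simp only [Function.comp, addLeftEmbedding_apply]
        rw [Nat.add_mod_left, Nat.mod_eq_of_lt (Finset.mem_range.mp hj)])]
      rw [odd_count_range]
      omega
    omega
  · rw [Finset.disjoint_left]
    intro x hx hy
    rw [Finset.mem_filter, Finset.mem_range] at hx
    rw [Finset.mem_filter, Finset.mem_map] at hy
    obtain ⟨⟨y, _, hy2⟩, _⟩ := hy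
    simp only [addLeftEmbedding_apply] at hy2
    omega

lemma circ_sad_card (M r m : ℕ) (hM : 2 * r + 1 ≤ M) [NeZero M] (hdvd : m ∣ M) (hm : 0 < m)
    (a : ZMod M) :
    ∃ w, ((cnn (circ M r hM) a).filter fun x => x.val % m % 2 = 1).card
      = ((range (2 * r + 1)).filter fun i => (w + i) % m % 2 = 1).card := by
  refine ⟨(a - (r : ZMod M)).val, ?_⟩
  rw [cnn_circ, Finset.filter_image, Finset.card_image_of_injOn
    ((cnn_circ_inj M r hM a).mono (Finset.coe_subset.mpr (Finset.filter_subset _ _)))]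
  congr 1
  apply Finset.filter_congr
  intro i hi
  rw [Finset.mem_range] at hi
  show (a - (r : ZMod M) + (i : ZMod M)).val % m % 2 = 1 ↔ _
  have hval : (a - (r : ZMod M) + (i : ZMod M)).val = ((a - (r : ZMod M)).val + i) % M := by
    rw [ZMod.val_add, ZMod.val_cast_of_lt (by omega)]
  rw [hval, Nat.mod_mod_of_dvd _ hdvd]

lemma ite_neg_one_eq_one (c : Prop) [Decidable c] :
    ((if c then (-1 : ℤ) else 1) = 1) ↔ ¬ c := by
  by_cases h : c <;> simp [h]

lemma ite_one_eq_one (c : Prop) [Decidable c] :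
    ((if c then (1 : ℤ) else -1) = 1) ↔ c := by
  by_cases h : c <;> simp [h]

lemma construct_mid (s t : ℕ) (hts : t ≤ s) :
    ∃ (G : SimpleGraph (Fin (8*s+3))) (f : Fin (8*s+3) → ℤ),
      IsConfig (2*(s+t)+1) (2*s+2) G f ∧ IsApproving G f := by
  haveI : NeZero (4*s+2) := ⟨by omega⟩
  haveI : NeZero (4*s+1) := ⟨by omega⟩
  have hM1 : 2*(s+t)+1 ≤ 4*s+2 := by omega
  have hM2 : 2*(s+t)+1 ≤ 4*s+1 := by omega
  set G₁ := circ (4*s+2) (s+t) hM1 with hG₁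
  set G₂ := circ (4*s+1) (s+t) hM2 with hG₂
  set f' : (ZMod (4*s+2) ⊕ ZMod (4*s+1)) → ℤ :=
    Sum.elim (fun x => if x.val % (2*s+1) % 2 = 1 then (-1:ℤ) else 1) (fun _ => -1) with hf'
  have hf'inl : ∀ x : ZMod (4*s+2),
      f' (Sum.inl x) = if x.val % (2*s+1) % 2 = 1 then (-1:ℤ) else 1 := fun x => rfl
  have hf'inr : ∀ x : ZMod (4*s+1), f' (Sum.inr x) = -1 := fun x => rfl
  have hsadbd : ∀ a : ZMod (4*s+2),
      ((cnn G₁ a).filter fun x => x.val % (2*s+1) % 2 = 1).card ≤ s + t := by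
    intro a
    obtain ⟨w, hw⟩ := circ_sad_card (4*s+2) (s+t) (2*s+1) hM1 ⟨2, by ring⟩ (by omega) a
    rw [← hG₁] at hw
    rw [hw]
    have hshape : 2*(s+t)+1 = 2*s+1+2*t := by ring
    rw [hshape]
    exact window_count s w t hts
  have hpropA : ∀ a : ZMod (4*s+2), 1 ≤ ∑ u ∈ cnn (sumGraph G₁ G₂) (Sum.inl a), f' u := by
    intro a
    rw [cnn_sumGraph_inl, Finset.sum_map]
    have heq : ∑ x ∈ cnn G₁ a, f' ((⟨Sum.inl, Sum.inl_injective⟩ :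
        ZMod (4*s+2) ↪ ZMod (4*s+2) ⊕ ZMod (4*s+1)) x)
        = ∑ x ∈ cnn G₁ a, (if x.val % (2*s+1) % 2 = 1 then (-1:ℤ) else 1) :=
      Finset.sum_congr rfl (fun x _ => hf'inl x)
    rw [heq]
    have hpm1 : ∀ x : ZMod (4*s+2), (if x.val % (2*s+1) % 2 = 1 then (-1:ℤ) else 1) = 1
        ∨ (if x.val % (2*s+1) % 2 = 1 then (-1:ℤ) else 1) = -1 := by
      intro x
      by_cases h : x.val % (2*s+1) % 2 = 1
      · right; rw [if_pos h]
      · left; rw [if_neg h]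
    have hs := sum_pm (cnn G₁ a) _ hpm1
    have hcc : (cnn G₁ a).card = 2*(s+t)+1 := cnn_circ_card _ _ hM1 a
    have hfe : ((cnn G₁ a).filter
        fun x => (if x.val % (2*s+1) % 2 = 1 then (-1:ℤ) else 1) = -1)
        = ((cnn G₁ a).filter fun x => x.val % (2*s+1) % 2 = 1) := by
      apply Finset.filter_congr
      intro x _
      by_cases h : x.val % (2*s+1) % 2 = 1
      · simp [h]
      · simp [h]
    rw [hfe, hcc] at hs
    have hb := hsadbd a
    have hbz : (((cnn G₁ a).filter fun x => x.val % (2*s+1) % 2 = 1).card : ℤ)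
        ≤ (s : ℤ) + (t : ℤ) := by exact_mod_cast hb
    rw [hs]
    push_cast
    omega
  apply package (β := ZMod (4*s+2) ⊕ ZMod (4*s+1))
    (by rw [Fintype.card_sum, ZMod.card, ZMod.card]; omega)
    (sumGraph G₁ G₂) f'
  · intro w
    cases w with
    | inl a => rw [cnn_sumGraph_inl_card, hG₁, cnn_circ_card]
    | inr b => rw [cnn_sumGraph_inr_card, hG₂, cnn_circ_card]
  · intro w
    cases w with
    | inl a =>
      rw [hf'inl a]
      by_cases h : a.val % (2*s+1) % 2 = 1
      · right; rw [if_pos h]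
      · left; rw [if_neg h]
    | inr b => right; exact hf'inr b
  · rw [card_filter_sum_type]
    have h2 : ((univ : Finset (ZMod (4*s+1))).filter fun b => f' (Sum.inr b) = 1).card = 0 := by
      rw [Finset.card_eq_zero, Finset.filter_eq_empty_iff]
      intro b _
      rw [hf'inr b]
      norm_num
    have h1 : ((univ : Finset (ZMod (4*s+2))).filter fun a => f' (Sum.inl a) = 1).card
        = 2*s+2 := by
      have hcongr : ((univ : Finset (ZMod (4*s+2))).filter fun a => f' (Sum.inl a) = 1).card
          = ((range (4*s+2)).filter fun j => ¬ (j % (2*s+1) % 2 = 1)).card := by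
        apply zmod_filter_card
        intro x
        rw [hf'inl x]
        exact ite_neg_one_eq_one _
      rw [hcongr]
      have hsplit := Finset.card_filter_add_card_filter_not
        (s := range (4*s+2)) (p := fun j => j % (2*s+1) % 2 = 1)
      have hcnt : ((range (4*s+2)).filter fun j => j % (2*s+1) % 2 = 1).card = 2*s :=
        range_sad_count s
      rw [Finset.card_range] at hsplit
      omega
    omega
  · rw [card_filter_sum_type]
    have h1 : ((univ : Finset (ZMod (4*s+2))).filter fun a =>
        1 ≤ ∑ u ∈ cnn (sumGraph G₁ G₂) (Sum.inl a), f' u).card = 4*s+2 := by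
      rw [Finset.filter_true_of_mem (fun a _ => hpropA a), Finset.card_univ, ZMod.card]
    omega

section TopG
variable (s : ℕ)

def topG : SimpleGraph (ZMod (4*s+1) ⊕ ZMod (4*s+2)) where
  Adj x y := match x, y with
    | Sum.inl _, Sum.inl _ => False
    | Sum.inl _, Sum.inr _ => True
    | Sum.inr _, Sum.inl _ => True
    | Sum.inr a, Sum.inr b => a ≠ b ∧ a - b = ((2*s+1 : ℕ) : ZMod (4*s+2))
  symm := by
    refine ⟨?_⟩
    rintro (a | a) (b | b) h
    · exact h
    · trivial
    · trivial
    · obtain ⟨hne, hd⟩ := h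
      refine ⟨hne.symm, ?_⟩
      have h2 : ((2*s+1 : ℕ) : ZMod (4*s+2)) + ((2*s+1 : ℕ) : ZMod (4*s+2)) = 0 := by
        rw [← Nat.cast_add, show (2*s+1) + (2*s+1) = 4*s+2 by ring, ZMod.natCast_self]
      calc b - a = -(a - b) := by ring
        _ = ((2*s+1 : ℕ) : ZMod (4*s+2)) := by rw [hd]; linear_combination -h2
  loopless := by
    refine ⟨?_⟩
    rintro (a | a) h
    · exact h
    · exact h.1 rfl

lemma topG_delta_ne : ((2*s+1 : ℕ) : ZMod (4*s+2)) ≠ 0 := by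
  haveI : NeZero (4*s+2) := ⟨by omega⟩
  intro h
  have h2 := congrArg ZMod.val h
  rw [ZMod.val_cast_of_lt (by omega), ZMod.val_zero] at h2
  omega

lemma topG_adj_rr (a b : ZMod (4*s+2)) :
    (topG s).Adj (Sum.inr a) (Sum.inr b) ↔ a ≠ b ∧ a - b = ((2*s+1 : ℕ) : ZMod (4*s+2)) :=
  Iff.rfl

lemma topG_inr_filter (c : ZMod (4*s+2)) :
    ((univ : Finset (ZMod (4*s+2))).filter fun b =>
      (Sum.inr b : ZMod (4*s+1) ⊕ ZMod (4*s+2)) = Sum.inr c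
        ∨ (topG s).Adj (Sum.inr c) (Sum.inr b))
      = {c, c - ((2*s+1 : ℕ) : ZMod (4*s+2))} := by
  set δ := ((2*s+1 : ℕ) : ZMod (4*s+2)) with hδ
  ext b
  simp only [mem_filter, mem_univ, true_and, Finset.mem_insert, Finset.mem_singleton,
    Sum.inr.injEq, topG_adj_rr]
  constructor
  · rintro (h | ⟨hne, hd⟩)
    · exact Or.inl h
    · right
      have hb : b = c - (c - b) := by ring
      rw [hb, hd]
  · rintro (h | h)
    · exact Or.inl h
    · right
      constructor
      · intro hcb
        rw [← hcb] at h
        have : δ = 0 := by linear_combination h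
        exact topG_delta_ne s this
      · rw [h]; ring

end TopG

lemma ite_one_eq_neg_one (c : Prop) [Decidable c] :
    ((if c then (1 : ℤ) else -1) = -1) ↔ ¬ c := by
  by_cases h : c <;> simp [h]

lemma range_filter_lt (a b : ℕ) (hab : a ≤ b) :
    ((range b).filter fun j => j < a) = range a := by
  ext j
  simp only [mem_filter, mem_range]
  omega

lemma card_filter_sum_ite {α β : Type*} [Fintype α] [Fintype β]
    (p : α ⊕ β → Prop) [DecidablePred p] :
    ((univ : Finset (α ⊕ β)).filter p).card
      = (∑ a : α, if p (Sum.inl a) then 1 else 0)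
        + (∑ b : β, if p (Sum.inr b) then 1 else 0) := by
  rw [Finset.card_filter, Fintype.sum_sum_type]

lemma sum_filter_sum_ite {α β : Type*} [Fintype α] [Fintype β]
    (p : α ⊕ β → Prop) [DecidablePred p] (g : α ⊕ β → ℤ) :
    ∑ x ∈ (univ : Finset (α ⊕ β)).filter p, g x
      = (∑ a : α, if p (Sum.inl a) then g (Sum.inl a) else 0)
        + (∑ b : β, if p (Sum.inr b) then g (Sum.inr b) else 0) := by
  rw [Finset.sum_filter, Fintype.sum_sum_type]

lemma construct_top (s : ℕ) (hs : 1 ≤ s) :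
    ∃ (G : SimpleGraph (Fin (8*s+3))) (f : Fin (8*s+3) → ℤ),
      IsConfig (4*s+3) (2*s+2) G f ∧ IsApproving G f := by
  haveI : NeZero (4*s+2) := ⟨by omega⟩
  haveI : NeZero (4*s+1) := ⟨by omega⟩
  set δ := ((2*s+1 : ℕ) : ZMod (4*s+2)) with hδ
  have hpairne : ∀ c : ZMod (4*s+2), c ≠ c - δ := by
    intro c h
    exact topG_delta_ne s (by linear_combination h)
  set f' : (ZMod (4*s+1) ⊕ ZMod (4*s+2)) → ℤ :=
    Sum.elim (fun x => if x.val < 2*s+2 then (1:ℤ) else -1) (fun _ => -1) with hf'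
  have hf'inl : ∀ x : ZMod (4*s+1),
      f' (Sum.inl x) = if x.val < 2*s+2 then (1:ℤ) else -1 := fun x => rfl
  have hf'inr : ∀ x : ZMod (4*s+2), f' (Sum.inr x) = -1 := fun x => rfl
  -- membership characterization of the inr closed nbhd, as an iff
  have hmemR : ∀ c b : ZMod (4*s+2),
      ((Sum.inr b : ZMod (4*s+1) ⊕ ZMod (4*s+2)) = Sum.inr c
        ∨ (topG s).Adj (Sum.inr c) (Sum.inr b)) ↔ (b = c ∨ b = c - δ) := by
    intro c b
    rw [Sum.inr.injEq, topG_adj_rr]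
    constructor
    · rintro (h | ⟨hne, hd⟩)
      · exact Or.inl h
      · right
        have hb : b = c - (c - b) := by ring
        rw [hb, hd]
    · rintro (h | h)
      · exact Or.inl h
      · right
        refine ⟨?_, by rw [h]; ring⟩
        intro hcb
        rw [← hcb] at h
        exact topG_delta_ne s (by linear_combination h)
  -- sad count on the left part
  have hsadL : ((univ : Finset (ZMod (4*s+1))).filter fun b => f' (Sum.inl b) = -1).card
      = 2*s-1 := by
    have hcongr : ((univ : Finset (ZMod (4*s+1))).filter fun b => f' (Sum.inl b) = -1).card
        = ((range (4*s+1)).filter fun j => ¬ (j < 2*s+2)).card := by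
      apply zmod_filter_card
      intro x
      rw [hf'inl x]
      exact ite_one_eq_neg_one _
    rw [hcongr]
    have hsplit := Finset.card_filter_add_card_filter_not
      (s := range (4*s+1)) (p := fun j => j < 2*s+2)
    rw [Finset.card_range, range_filter_lt (2*s+2) (4*s+1) (by omega), Finset.card_range]
      at hsplit
    omega
  have hsumL : ∑ b : ZMod (4*s+1), f' (Sum.inl b) = 3 := by
    have hpm1 : ∀ x : ZMod (4*s+1), f' (Sum.inl x) = 1 ∨ f' (Sum.inl x) = -1 := by
      intro x
      rw [hf'inl x]
      by_cases h : x.val < 2*s+2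
      · left; rw [if_pos h]
      · right; rw [if_neg h]
    have hs2 := sum_pm (univ : Finset (ZMod (4*s+1))) (fun b => f' (Sum.inl b))
      (fun x => hpm1 x)
    have hsadL2 : ((univ : Finset (ZMod (4*s+1))).filter
        fun b => (fun b => f' (Sum.inl b)) b = -1).card = 2*s-1 := hsadL
    rw [hsadL2, Finset.card_univ, ZMod.card] at hs2
    rw [hs2]
    push_cast [Nat.cast_sub (by omega : 1 ≤ 2*s)]
    ring
  -- proponent property for every inr vertex
  have hprop : ∀ c : ZMod (4*s+2), 1 ≤ ∑ u ∈ cnn (topG s) (Sum.inr c), f' u := by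
    intro c
    rw [cnn, sum_filter_sum_ite]
    have hLtrue : ∀ b : ZMod (4*s+1),
        ((Sum.inl b : ZMod (4*s+1) ⊕ ZMod (4*s+2)) = Sum.inr c
          ∨ (topG s).Adj (Sum.inr c) (Sum.inl b)) ↔ True :=
      fun b => iff_true_intro (Or.inr trivial)
    simp only [hLtrue, hmemR, if_true]
    have hRs : (∑ b : ZMod (4*s+2),
        if b = c ∨ b = c - δ then f' (Sum.inr b) else 0) = -2 := by
      have hpt : ∀ b : ZMod (4*s+2),
          (if b = c ∨ b = c - δ then f' (Sum.inr b) else 0)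
          = (if b = c then (-1:ℤ) else 0) + (if b = c - δ then (-1:ℤ) else 0) := by
        intro b
        by_cases h1 : b = c
        · rw [if_pos (Or.inl h1), if_pos h1, if_neg (by rw [h1]; exact hpairne c), hf'inr]
          ring
        · by_cases h2 : b = c - δ
          · rw [if_pos (Or.inr h2), if_neg h1, if_pos h2, hf'inr]
            ring
          · rw [if_neg (by tauto), if_neg h1, if_neg h2]
            ring
      rw [Finset.sum_congr rfl (fun b _ => hpt b), Finset.sum_add_distrib,
        Finset.sum_ite_eq' univ c (fun _ => (-1:ℤ)),
        Finset.sum_ite_eq' univ (c - δ) (fun _ => (-1:ℤ))]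
      simp
    rw [hRs, hsumL]
    omega
  apply package (β := ZMod (4*s+1) ⊕ ZMod (4*s+2))
    (by rw [Fintype.card_sum, ZMod.card, ZMod.card]; omega)
    (topG s) f'
  · intro w
    cases w with
    | inl a =>
      rw [cnn, card_filter_sum_ite]
      have hLiff : ∀ b : ZMod (4*s+1),
          ((Sum.inl b : ZMod (4*s+1) ⊕ ZMod (4*s+2)) = Sum.inl a
            ∨ (topG s).Adj (Sum.inl a) (Sum.inl b)) ↔ b = a := by
        intro b
        rw [Sum.inl.injEq]
        constructor
        · rintro (h | h)
          · exact h
          · exact absurd h (fun hh => hh)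
        · intro h; exact Or.inl h
      have hRtrue : ∀ b : ZMod (4*s+2),
          ((Sum.inr b : ZMod (4*s+1) ⊕ ZMod (4*s+2)) = Sum.inl a
            ∨ (topG s).Adj (Sum.inl a) (Sum.inr b)) ↔ True :=
        fun b => iff_true_intro (Or.inr trivial)
      simp only [hLiff, hRtrue, if_true]
      rw [Finset.sum_ite_eq' univ a (fun _ => 1), Finset.sum_const,
        Finset.card_univ, ZMod.card]
      simp only [Finset.mem_univ, if_true, smul_eq_mul, mul_one]
      omega
    | inr c =>
      rw [cnn, card_filter_sum_ite]
      have hLtrue : ∀ b : ZMod (4*s+1),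
          ((Sum.inl b : ZMod (4*s+1) ⊕ ZMod (4*s+2)) = Sum.inr c
            ∨ (topG s).Adj (Sum.inr c) (Sum.inl b)) ↔ True :=
        fun b => iff_true_intro (Or.inr trivial)
      simp only [hLtrue, hmemR, if_true]
      have hRs : (∑ b : ZMod (4*s+2),
          if b = c ∨ b = c - δ then (1:ℕ) else 0) = 2 := by
        have hpt : ∀ b : ZMod (4*s+2),
            (if b = c ∨ b = c - δ then (1:ℕ) else 0)
            = (if b = c then 1 else 0) + (if b = c - δ then 1 else 0) := by
          intro b
          by_cases h1 : b = c
          · rw [if_pos (Or.inl h1), if_pos h1, if_neg (by rw [h1]; exact hpairne c)]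
          · by_cases h2 : b = c - δ
            · rw [if_pos (Or.inr h2), if_neg h1, if_pos h2]
            · rw [if_neg (by tauto), if_neg h1, if_neg h2]
        rw [Finset.sum_congr rfl (fun b _ => hpt b), Finset.sum_add_distrib,
          Finset.sum_ite_eq' univ c (fun _ => (1:ℕ)),
          Finset.sum_ite_eq' univ (c - δ) (fun _ => (1:ℕ))]
        simp
      rw [hRs, Finset.sum_const, Finset.card_univ, ZMod.card, smul_eq_mul, mul_one]
  · intro w
    cases w with
    | inl a =>
      rw [hf'inl a]
      by_cases h : a.val < 2*s+2
      · left; rw [if_pos h]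
      · right; rw [if_neg h]
    | inr c => right; exact hf'inr c
  · rw [card_filter_sum_type]
    have h2 : ((univ : Finset (ZMod (4*s+2))).filter fun b => f' (Sum.inr b) = 1).card = 0 := by
      rw [Finset.card_eq_zero, Finset.filter_eq_empty_iff]
      intro b _
      rw [hf'inr b]
      norm_num
    have h1 : ((univ : Finset (ZMod (4*s+1))).filter fun b => f' (Sum.inl b) = 1).card
        = 2*s+2 := by
      have hcongr : ((univ : Finset (ZMod (4*s+1))).filter fun b => f' (Sum.inl b) = 1).card
          = ((range (4*s+1)).filter fun j => j < 2*s+2).card := by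
        apply zmod_filter_card
        intro x
        rw [hf'inl x]
        exact ite_one_eq_one _
      rw [hcongr, range_filter_lt (2*s+2) (4*s+1) (by omega), Finset.card_range]
    omega
  · rw [card_filter_sum_type]
    have h1 : ((univ : Finset (ZMod (4*s+2))).filter fun c =>
        1 ≤ ∑ u ∈ cnn (topG s) (Sum.inr c), f' u).card = 4*s+2 := by
      rw [Finset.filter_true_of_mem (fun c _ => hprop c), Finset.card_univ, ZMod.card]
    omega

lemma construct_allhappy (n r : ℕ) (h : 2*r+1 ≤ n) :
    ∃ (G : SimpleGraph (Fin n)) (f : Fin n → ℤ),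
      IsConfig (2*r+1) n G f ∧ IsApproving G f := by
  haveI : NeZero n := ⟨by omega⟩
  apply package (β := ZMod n) (by rw [ZMod.card]) (circ n r h) (fun _ => 1)
  · intro w; exact cnn_circ_card n r h w
  · intro w; left; rfl
  · rw [Finset.filter_true_of_mem (fun _ _ => rfl), Finset.card_univ, ZMod.card]
  · have hp : ∀ w : ZMod n, 1 ≤ ∑ u ∈ cnn (circ n r h) w, (1:ℤ) := by
      intro w
      rw [Finset.sum_const, cnn_circ_card n r h w]
      simp
    rw [Finset.filter_true_of_mem (fun w _ => hp w), Finset.card_univ, ZMod.card]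
    omega

lemma construct_three :
    ∃ (G : SimpleGraph (Fin 3)) (f : Fin 3 → ℤ), IsConfig 3 2 G f ∧ IsApproving G f := by
  refine ⟨⊤, fun v => if v.val < 2 then 1 else -1, ⟨?_, ?_, ?_⟩, ?_⟩
  · intro v
    have huniv : closedNbhd (⊤ : SimpleGraph (Fin 3)) v = univ := by
      rw [closedNbhd]
      ext u
      simp only [mem_filter, mem_univ, true_and, iff_true]
      rcases eq_or_ne u v with h | h
      · exact Or.inl h
      · exact Or.inr (by simp [SimpleGraph.top_adj]; exact h.symm)
    rw [huniv, Finset.card_univ, Fintype.card_fin]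
  · intro v
    by_cases h : v.val < 2
    · left; exact if_pos h
    · right; exact if_neg h
  · have hc : ((univ : Finset (Fin 3)).filter fun v =>
        (if v.val < 2 then (1:ℤ) else -1) = 1).card
        = ((univ : Finset (Fin 3)).filter fun v => v.val < 2).card :=
      card_filter_iff (fun v => ite_one_eq_one _)
    rw [hc]
    decide
  · unfold IsApproving numProponents
    beta_reduce
    have huniv : ∀ v : Fin 3, closedNbhd (⊤ : SimpleGraph (Fin 3)) v = univ := by
      intro v
      rw [closedNbhd]
      ext u
      simp only [mem_filter, mem_univ, true_and, iff_true]
      rcases eq_or_ne u v with h | h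
      · exact Or.inl h
      · exact Or.inr (by simp [SimpleGraph.top_adj]; exact h.symm)
    have hsum : ∀ v : Fin 3, ∑ u ∈ closedNbhd (⊤ : SimpleGraph (Fin 3)) v,
        (if u.val < 2 then (1:ℤ) else -1) = 1 := by
      intro v
      rw [huniv v]
      rw [Fin.sum_univ_three]
      norm_num
    have : ((univ : Finset (Fin 3)).filter fun v =>
        1 ≤ ∑ u ∈ closedNbhd (⊤ : SimpleGraph (Fin 3)) v,
          (if u.val < 2 then (1:ℤ) else -1)).card = 3 := by
      rw [Finset.filter_true_of_mem (fun v _ => by rw [hsum v]), Finset.card_univ,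
        Fintype.card_fin]
    omega

lemma bound_main {s d h : ℕ} (hle : (8*s+4)*(d+1) ≤ 4*(h*d)) : 2*s+2 ≤ h := by
  by_contra hc
  push_neg at hc
  have h4 : h ≤ 2*s+1 := by omega
  have hm : h*d ≤ (2*s+1)*d := Nat.mul_le_mul_right d h4
  have e1 : (8*s+4)*(d+1) = 8*(s*d)+4*d+8*s+4 := by ring
  have e2 : (2*s+1)*d = 2*(s*d)+d := by ring
  rw [e2] at hm
  rw [e1] at hle
  omega

lemma bound_low {s d h : ℕ} (hd : d ≤ 2*s) (hle : (8*s+4)*(d+1) ≤ 4*(h*d)) : 2*s+3 ≤ h := by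
  by_contra hc
  push_neg at hc
  have h4 : h ≤ 2*s+2 := by omega
  have hm : h*d ≤ (2*s+2)*d := Nat.mul_le_mul_right d h4
  have e1 : (8*s+4)*(d+1) = 8*(s*d)+4*d+8*s+4 := by ring
  have e2 : (2*s+2)*d = 2*(s*d)+2*d := by ring
  rw [e2] at hm
  rw [e1] at hle
  omega

lemma hmin_def (n d : ℕ) : hmin n d = sInf {h : ℕ | ∃ (G : SimpleGraph (Fin n))
    (f : Fin n → ℤ), IsConfig d h G f ∧ IsApproving G f} := rfl

-- the set of achievable happy counts
lemma lb_elem {n d h : ℕ}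
    (hmem : h ∈ {h : ℕ | ∃ (G : SimpleGraph (Fin n)) (f : Fin n → ℤ),
      IsConfig d h G f ∧ IsApproving G f}) :
    (n + 1) * (d + 1) ≤ 4 * (h * d) ∧ d + 1 ≤ 2 * h := by
  obtain ⟨G, f, hc, ha⟩ := hmem
  exact lb_main G f hc ha

lemma hSne (n d : ℕ) (hodd : Odd d) (hdn : d ≤ n) (hn : 0 < n) :
    {h : ℕ | ∃ (G : SimpleGraph (Fin n)) (f : Fin n → ℤ),
      IsConfig d h G f ∧ IsApproving G f}.Nonempty := by
  obtain ⟨k, hk⟩ := hodd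
  have h2 : 2*k+1 ≤ n := by omega
  obtain ⟨G, f, hc, ha⟩ := construct_allhappy n k h2
  rw [hk]
  exact ⟨n, G, f, hc, ha⟩

lemma hmin_in_range (s d : ℕ) (hodd : Odd d) (h1 : 2*s+1 ≤ d) (h2 : d ≤ 4*s+3) :
    hmin (8*s+3) d = 2*s+2 := by
  have hmem : (2*s+2) ∈ {h : ℕ | ∃ (G : SimpleGraph (Fin (8*s+3))) (f : Fin (8*s+3) → ℤ),
      IsConfig d h G f ∧ IsApproving G f} := by
    obtain ⟨k, hk⟩ := hodd
    rcases Nat.lt_or_ge d (4*s+2) with hlt | hge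
    · -- middle construction
      have hts : k - s ≤ s := by omega
      obtain ⟨G, f, hc, ha⟩ := construct_mid s (k - s) hts
      have hdd : 2*(s+(k-s))+1 = d := by omega
      rw [hdd] at hc
      exact ⟨G, f, hc, ha⟩
    · -- top construction, d = 4s+3
      have hd43 : d = 4*s+3 := by omega
      rcases Nat.eq_zero_or_pos s with hs0 | hs1
      · subst hs0
        obtain ⟨G, f, hc, ha⟩ := construct_three
        rw [show (8*0+3 : ℕ) = 3 by norm_num, hd43]
        exact ⟨G, f, by simpa using hc, ha⟩
      · obtain ⟨G, f, hc, ha⟩ := construct_top s hs1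
        rw [hd43]
        exact ⟨G, f, by simpa using hc, ha⟩
  apply le_antisymm
  · exact Nat.sInf_le hmem
  · have hne : {h : ℕ | ∃ (G : SimpleGraph (Fin (8*s+3))) (f : Fin (8*s+3) → ℤ),
        IsConfig d h G f ∧ IsApproving G f}.Nonempty := ⟨_, hmem⟩
    have hel := Nat.sInf_mem hne
    have hb := lb_elem hel
    rw [← hmin_def] at hb
    apply bound_main (s := s) (d := d)
    have hb1 := hb.1
    rw [show (8*s+3+1) = 8*s+4 by omega] at hb1
    exact hb1

lemma hmin_out_range (s d : ℕ) (hodd : Odd d) (hd1 : 1 ≤ d) (hdn : d ≤ 8*s+3)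
    (hout : d < 2*s+1 ∨ 4*s+3 < d) :
    2*s+3 ≤ hmin (8*s+3) d := by
  have hne := hSne (8*s+3) d hodd hdn (by omega)
  have hel := Nat.sInf_mem hne
  have hb := lb_elem hel
  rw [← hmin_def] at hb
  have hb1 := hb.1
  rw [show (8*s+3+1) = 8*s+4 by omega] at hb1
  rcases hout with hlt | hgt
  · exact bound_low (by omega) hb1
  · have hb2 := hb.2
    omega

lemma hminN_def (n : ℕ) : hminN n
    = sInf {m : ℕ | ∃ d : ℕ, Odd d ∧ 1 ≤ d ∧ d ≤ n ∧ m = hmin n d} := rfl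

lemma hminN_eq (s : ℕ) : hminN (8*s+3) = 2*s+2 := by
  rw [hminN_def]
  have hodd43 : Odd (4*s+3) := ⟨2*s+1, by ring⟩
  have hmem : (2*s+2) ∈ {m : ℕ | ∃ d : ℕ, Odd d ∧ 1 ≤ d ∧ d ≤ 8*s+3 ∧ m = hmin (8*s+3) d} :=
    ⟨4*s+3, hodd43, by omega, by omega, (hmin_in_range s (4*s+3) hodd43 (by omega) (by omega)).symm⟩
  apply le_antisymm
  · exact Nat.sInf_le hmem
  · have hne : {m : ℕ | ∃ d : ℕ, Odd d ∧ 1 ≤ d ∧ d ≤ 8*s+3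
        ∧ m = hmin (8*s+3) d}.Nonempty := ⟨_, hmem⟩
    have hel := Nat.sInf_mem hne
    obtain ⟨d, hodd, hd1, hdn, heq⟩ := hel
    have hne2 := hSne (8*s+3) d hodd hdn (by omega)
    have hel2 := Nat.sInf_mem hne2
    have hb := lb_elem hel2
    rw [← hmin_def] at hb
    have hb1 := hb.1
    rw [show (8*s+3+1) = 8*s+4 by omega] at hb1
    have h2 : 2*s+2 ≤ hmin (8*s+3) d := bound_main hb1
    omega

end Stmt19Aux

/-- for `n ≡ 3 (mod 8)`: `hmin(n) = (n+5)/4`, attained exactly for odd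
`d` with `(n+1)/4 ≤ d ≤ (n+3)/2`. -/
theorem stmt19 (n : ℕ) (hn : Odd n) (hnpos : 0 < n) (hmod : n % 8 = 3) :
    hminN n = (n + 5) / 4 ∧
    ∀ d : ℕ, Odd d → 1 ≤ d → d ≤ n →
      (hmin n d = hminN n ↔ ((n + 1) / 4 ≤ d ∧ d ≤ (n + 3) / 2)) := by
  obtain ⟨s, rfl⟩ : ∃ s, n = 8*s+3 := ⟨n/8, by omega⟩
  constructor
  · rw [Stmt19Aux.hminN_eq s]
    omega
  · intro d hodd hd1 hdn
    rw [Stmt19Aux.hminN_eq s]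
    constructor
    · intro heq
      by_contra hout
      rw [not_and_or] at hout
      push_neg at hout
      have hout2 : d < 2*s+1 ∨ 4*s+3 < d := by
        rcases hout with h | h
        · left; omega
        · right; omega
      have hlow := Stmt19Aux.hmin_out_range s d hodd hd1 hdn hout2
      omega
    · rintro ⟨h1, h2⟩
      have h1' : 2*s+1 ≤ d := by omega
      have h2' : d ≤ 4*s+3 := by omega
      exact Stmt19Aux.hmin_in_range s d hodd h1' h2'
end
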